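/- arXiv:2109.02181 — 5 statements merged into one kernel-verified Lean document; each statement's English description precedes it below -/
import Mathlib

section
/- Let H and F be graphs with |V(H)| ≥ |V(F)| such that H does not contain F as a subgraph. Then ex_re(n,H,F) = Θ(n^{|V(H)|}), i.e. there exist constants c, C > 0 such that for all sufficiently large n, c·n^{|V(H)|} ≤ ex_re(n,H,F) ≤ C·n^{|V(H)|}. -/
open SimpleGraph

/-- `A` is a copy of `H`: the subgraph `A` of its ambient graph is isomorphic to `H`. -/
def SimpleGraph.Subgraph.IsCopyOf {V W : Type*} {G : SimpleGraph V} (A : G.Subgraph)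
    (H : SimpleGraph W) : Prop :=
  Nonempty (A.coe ≃g H)

/-- Two subgraphs of `G` align if the vertex set of one contains that of the other. -/
def SimpleGraph.Subgraph.Aligns {V : Type*} {G : SimpleGraph V} (A B : G.Subgraph) : Prop :=
  A.verts ⊆ B.verts ∨ B.verts ⊆ A.verts

/-- A subgraph is nice (w.r.t. `F`) if it aligns with no copy of `F`. -/
def SimpleGraph.Subgraph.Nice {V W : Type*} {G : SimpleGraph V} (A : G.Subgraph)
    (F : SimpleGraph W) : Prop :=
  ∀ B : G.Subgraph, B.IsCopyOf F → ¬ A.Aligns B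

/-- `N(H,G)`: the number of copies of `H` in `G`. -/
noncomputable def copyCount {V W : Type*} (H : SimpleGraph W) (G : SimpleGraph V) : ℕ :=
  Nat.card {A : G.Subgraph // A.IsCopyOf H}

/-- `N_re(H,F,G)`: the number of copies of `H` in `G` that align with no copy of `F`. -/
noncomputable def niceCopyCount {V W U : Type*} (H : SimpleGraph W) (F : SimpleGraph U)
    (G : SimpleGraph V) : ℕ :=
  Nat.card {A : G.Subgraph // A.IsCopyOf H ∧ A.Nice F}

/-- `G` is `F`-free: `G` contains no copy of `F`. -/
def FreeOf {V W : Type*} (F : SimpleGraph W) (G : SimpleGraph V) : Prop :=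
  ¬ ∃ A : G.Subgraph, A.IsCopyOf F

/-- `ex_re(n,H,F)`: the maximum of `N_re(H,F,G)` over `n`-vertex graphs `G`. -/
noncomputable def exRe {W U : Type*} (n : ℕ) (H : SimpleGraph W) (F : SimpleGraph U) : ℕ :=
  sSup {N | ∃ G : SimpleGraph (Fin n), N = niceCopyCount H F G}

/-- `ex(n,H,F)`: the maximum number of copies of `H` in an `n`-vertex `F`-free graph. -/
noncomputable def exGen {W U : Type*} (n : ℕ) (H : SimpleGraph W) (F : SimpleGraph U) : ℕ :=
  sSup {N | ∃ G : SimpleGraph (Fin n), FreeOf F G ∧ N = copyCount H G}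

instance subgraphFinite {V : Type*} [Finite V] (G : SimpleGraph V) : Finite G.Subgraph :=
  Finite.of_injective (fun A : G.Subgraph => (A.verts, A.Adj))
    (fun _ _ h => SimpleGraph.Subgraph.ext (congrArg Prod.fst h) (congrArg Prod.snd h))

lemma card_verts_of_isCopyOf {V W : Type*} [Fintype W] {G : SimpleGraph V} {A : G.Subgraph}
    {H : SimpleGraph W} (h : A.IsCopyOf H) : Nat.card A.verts = Fintype.card W := by
  obtain ⟨e⟩ := h
  rw [Nat.card_congr e.toEquiv, Nat.card_eq_fintype_card]

noncomputable def copyKey {n : ℕ} {G : SimpleGraph (Fin n)} {W : Type*} [Fintype W]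
    {H : SimpleGraph W} (p : {A : G.Subgraph // A.IsCopyOf H}) :
    (Fin (Fintype.card W) → Fin n) × (Fin (Fintype.card W) → Fin (Fintype.card W) → Prop) :=
  ((fun i => ((Finite.equivFinOfCardEq (card_verts_of_isCopyOf p.2)).symm i : Fin n)),
   (fun i j => p.1.Adj ((Finite.equivFinOfCardEq (card_verts_of_isCopyOf p.2)).symm i)
      ((Finite.equivFinOfCardEq (card_verts_of_isCopyOf p.2)).symm j)))

lemma copyKey_injective {n : ℕ} {G : SimpleGraph (Fin n)} {W : Type*} [Fintype W]
    {H : SimpleGraph W} : Function.Injective (copyKey (G := G) (H := H)) := by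
  rintro ⟨A, hA⟩ ⟨B, hB⟩ hEq
  set eA := (Finite.equivFinOfCardEq (card_verts_of_isCopyOf hA)).symm with heA
  set eB := (Finite.equivFinOfCardEq (card_verts_of_isCopyOf hB)).symm with heB
  have h1 : (fun i => ((eA i : A.verts) : Fin n)) = (fun i => ((eB i : B.verts) : Fin n)) :=
    congrArg Prod.fst hEq
  have h2 : (fun i j => A.Adj (eA i) (eA j)) = (fun i j => B.Adj (eB i) (eB j)) :=
    congrArg Prod.snd hEq
  have hrange : ∀ {C : G.Subgraph} (e : Fin (Fintype.card W) ≃ C.verts),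
      C.verts = Set.range (fun i => ((e i : C.verts) : Fin n)) := by
    intro C e
    ext x
    constructor
    · intro hx
      exact ⟨e.symm ⟨x, hx⟩, by simp⟩
    · rintro ⟨i, rfl⟩
      exact (e i).2
  have hverts : A.verts = B.verts := by
    rw [hrange eA, hrange eB, h1]
  refine Subtype.ext (SimpleGraph.Subgraph.ext hverts ?_)
  funext u v
  ext
  have key : ∀ i j, (A.Adj ((eA i : A.verts) : Fin n) ((eA j : A.verts) : Fin n) ↔
      B.Adj ((eA i : A.verts) : Fin n) ((eA j : A.verts) : Fin n)) := by
    intro i j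
    have hcoe : ∀ k, ((eA k : A.verts) : Fin n) = ((eB k : B.verts) : Fin n) :=
      fun k => congrFun h1 k
    have h := iff_of_eq (congrFun (congrFun h2 i) j)
    rwa [← hcoe i, ← hcoe j] at h
  constructor
  · intro hadj
    have hu : u ∈ A.verts := A.edge_vert hadj
    have hv : v ∈ A.verts := A.edge_vert hadj.symm
    have hiu : ((eA (eA.symm ⟨u, hu⟩) : A.verts) : Fin n) = u := by simp
    have hiv : ((eA (eA.symm ⟨v, hv⟩) : A.verts) : Fin n) = v := by simp
    have := (key (eA.symm ⟨u, hu⟩) (eA.symm ⟨v, hv⟩)).mp (by rwa [hiu, hiv])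
    rwa [hiu, hiv] at this
  · intro hadj
    have hu : u ∈ A.verts := hverts ▸ B.edge_vert hadj
    have hv : v ∈ A.verts := hverts ▸ B.edge_vert hadj.symm
    have hiu : ((eA (eA.symm ⟨u, hu⟩) : A.verts) : Fin n) = u := by simp
    have hiv : ((eA (eA.symm ⟨v, hv⟩) : A.verts) : Fin n) = v := by simp
    have := (key (eA.symm ⟨u, hu⟩) (eA.symm ⟨v, hv⟩)).mpr (by rwa [hiu, hiv])
    rwa [hiu, hiv] at this


lemma copyCount_le {W : Type*} [Fintype W] (H : SimpleGraph W) {n : ℕ} (G : SimpleGraph (Fin n)) :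
    _root_.copyCount H G ≤ n ^ (Fintype.card W) *
      Nat.card (Fin (Fintype.card W) → Fin (Fintype.card W) → Prop) := by
  have := Nat.card_le_card_of_injective _ (copyKey_injective (G := G) (H := H))
  rw [Nat.card_prod, Nat.card_fun] at this
  simpa [_root_.copyCount, Nat.card_eq_fintype_card] using this

lemma niceCopyCount_le_copyCount {W U : Type*} (H : SimpleGraph W) (F : SimpleGraph U)
    {n : ℕ} (G : SimpleGraph (Fin n)) : niceCopyCount H F G ≤ copyCount H G :=
  Nat.card_le_card_of_injective
    (fun p : {A : G.Subgraph // A.IsCopyOf H ∧ A.Nice F} => (⟨p.1, p.2.1⟩ : {A : G.Subgraph // A.IsCopyOf H}))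
    (fun p q h => Subtype.ext (congrArg (fun x : {A : G.Subgraph // A.IsCopyOf H} => x.1) h))

lemma exRe_nonempty {W U : Type*} (n : ℕ) (H : SimpleGraph W) (F : SimpleGraph U) :
    {N | ∃ G : SimpleGraph (Fin n), N = niceCopyCount H F G}.Nonempty :=
  ⟨niceCopyCount H F ⊥, ⟨⊥, rfl⟩⟩

lemma exRe_le {W U : Type*} [Fintype W] (n : ℕ) (H : SimpleGraph W) (F : SimpleGraph U) :
    exRe n H F ≤ n ^ (Fintype.card W) *
      Nat.card (Fin (Fintype.card W) → Fin (Fintype.card W) → Prop) := by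
  apply csSup_le (exRe_nonempty n H F)
  rintro N ⟨G, rfl⟩
  exact le_trans (niceCopyCount_le_copyCount H F G) (copyCount_le H G)

lemma exRe_bddAbove {W U : Type*} [Fintype W] (n : ℕ) (H : SimpleGraph W) (F : SimpleGraph U) :
    BddAbove {N | ∃ G : SimpleGraph (Fin n), N = niceCopyCount H F G} := by
  refine ⟨n ^ (Fintype.card W) *
      Nat.card (Fin (Fintype.card W) → Fin (Fintype.card W) → Prop), ?_⟩
  rintro N ⟨G, rfl⟩
  exact le_trans (niceCopyCount_le_copyCount H F G) (copyCount_le H G)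


lemma card_beta_pos {α β : Type*} [Fintype β] {H : SimpleGraph α} {F : SimpleGraph β}
    (hfree : FreeOf F H) : 0 < Fintype.card β := by
  by_contra hcon
  have hβ : IsEmpty β := Fintype.card_eq_zero_iff.mp (by omega)
  have hv : IsEmpty ((⊥ : H.Subgraph).verts) := Set.isEmpty_coe_sort.2 (by simp)
  exact hfree ⟨⊥, ⟨⟨Equiv.equivOfIsEmpty _ _, fun {a b} => isEmptyElim a⟩⟩⟩

/-- Push a subgraph of `comap f H` forward to a subgraph of `H`. -/
def pushSub {V α : Type*} (H : SimpleGraph α) (f : V → α)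
    (B : (SimpleGraph.comap f H).Subgraph) : H.Subgraph where
  verts := Set.image f B.verts
  Adj a b := ∃ u v, B.Adj u v ∧ f u = a ∧ f v = b
  adj_sub := by rintro a b ⟨u, v, huv, rfl, rfl⟩; exact B.adj_sub huv
  edge_vert := by rintro a b ⟨u, v, huv, rfl, rfl⟩; exact ⟨u, B.edge_vert huv, rfl⟩
  symm := ⟨by rintro a b ⟨u, v, huv, rfl, rfl⟩; exact ⟨v, u, huv.symm, rfl, rfl⟩⟩

lemma lower_bound {α β : Type*} [Fintype α] [Fintype β] (H : SimpleGraph α) (F : SimpleGraph β)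
    (hcard : Fintype.card β ≤ Fintype.card α) (hfree : FreeOf F H)
    (hb : 0 < Fintype.card β) (n : ℕ) :
    (n / Fintype.card α) ^ (Fintype.card α) ≤ exRe n H F := by
  set h := Fintype.card α with hdef
  have hh : 0 < h := lt_of_lt_of_le hb hcard
  set eα := Fintype.equivFin α with heα
  set f : Fin n → α := fun v => eα.symm ⟨v.1 % h, Nat.mod_lt _ hh⟩ with hf
  set Gn := SimpleGraph.comap f H with hGn
  have fg : ∀ (g : ∀ a : α, {v : Fin n // f v = a}) (a : α), f ((g a) : Fin n) = a :=
    fun g a => (g a).2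
  have ginj : ∀ (g : ∀ a, {v : Fin n // f v = a}) (x y : Fin n),
      x ∈ Set.range (fun a => ((g a) : Fin n)) → y ∈ Set.range (fun a => ((g a) : Fin n)) →
      f x = f y → x = y := by
    rintro g x y ⟨a, rfl⟩ ⟨a', rfl⟩ hxy
    rw [fg, fg] at hxy
    rw [hxy]
  set subA : (∀ a, {v : Fin n // f v = a}) → Gn.Subgraph :=
    fun g => (⊤ : Gn.Subgraph).induce (Set.range (fun a => ((g a) : Fin n))) with hsubA
  have hbij : ∀ g : ∀ a : α, {v : Fin n // f v = a}, Function.Bijective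
      (fun x : ↥(Set.range (fun a => ((g a) : Fin n))) => f x.1) := by
    intro g
    constructor
    · intro x y hxy
      exact Subtype.ext (ginj g _ _ x.2 y.2 hxy)
    · intro a
      exact ⟨⟨(g a : Fin n), ⟨a, rfl⟩⟩, fg g a⟩
  have hcopy : ∀ g : ∀ a : α, {v : Fin n // f v = a}, (subA g).IsCopyOf H := by
    intro g
    refine ⟨⟨Equiv.ofBijective _ (hbij g), ?_⟩⟩
    intro x y
    constructor
    · intro hadj
      exact ⟨x.2, y.2, hadj⟩
    · intro hadj
      exact hadj.2.2
  have scard : ∀ g : ∀ a : α, {v : Fin n // f v = a}, Nat.card ↥(Set.range (fun a => ((g a) : Fin n))) = h := by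
    intro g
    rw [Nat.card_congr (Equiv.ofBijective _ (hbij g)), Nat.card_eq_fintype_card]
  have hnice : ∀ g : ∀ a : α, {v : Fin n // f v = a}, (subA g).Nice F := by
    intro g B hB hal
    have hBcard : Nat.card ↥B.verts = Fintype.card β := card_verts_of_isCopyOf hB
    have hsver : (subA g).verts = Set.range (fun a => ((g a) : Fin n)) := rfl
    have hsub : B.verts ⊆ Set.range (fun a => ((g a) : Fin n)) := by
      rcases hal with hal | hal
      · have heq : Set.range (fun a => ((g a) : Fin n)) = B.verts :=
          Set.eq_of_subset_of_ncard_le (hsver ▸ hal) (by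
            rw [← Nat.card_coe_set_eq, ← Nat.card_coe_set_eq, hBcard, scard g]
            exact hcard)
        exact heq.ge
      · exact hsver ▸ hal
    have finjB : ∀ x ∈ B.verts, ∀ y ∈ B.verts, f x = f y → x = y :=
      fun x hx y hy => ginj g x y (hsub hx) (hsub hy)
    obtain ⟨eB⟩ := hB
    refine hfree ⟨pushSub H f B, ?_⟩
    have hbij2 : Function.Bijective (fun u : ↥B.verts =>
        (⟨f u.1, ⟨u.1, u.2, rfl⟩⟩ : ↥(Set.image f B.verts))) := by
      constructor
      · intro x y hxy
        exact Subtype.ext (finjB _ x.2 _ y.2 (congrArg Subtype.val hxy))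
      · rintro ⟨a, u, hu, rfl⟩
        exact ⟨⟨u, hu⟩, rfl⟩
    have isoBC : B.coe ≃g (pushSub H f B).coe := by
      refine ⟨Equiv.ofBijective _ hbij2, ?_⟩
      intro u v
      constructor
      · rintro ⟨u', v', huv, hu', hv'⟩
        have h1 : u' = u.1 := finjB _ (B.edge_vert huv) _ u.2 hu'
        have h2 : v' = v.1 := finjB _ (B.edge_vert huv.symm) _ v.2 hv'
        rw [h1, h2] at huv
        exact huv
      · intro huv
        exact ⟨u.1, v.1, huv, rfl, rfl⟩
    exact ⟨isoBC.symm.trans eB⟩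
  have hpack : Function.Injective (fun g : (∀ a, {v : Fin n // f v = a}) =>
      (⟨subA g, hcopy g, hnice g⟩ : {A : Gn.Subgraph // A.IsCopyOf H ∧ A.Nice F})) := by
    intro g g' hEq
    have hv : Set.range (fun a => ((g a) : Fin n)) = Set.range (fun a => ((g' a) : Fin n)) :=
      congrArg (fun x : {A : Gn.Subgraph // A.IsCopyOf H ∧ A.Nice F} => x.1.verts) hEq
    funext a
    obtain ⟨a', ha'⟩ : ((g a : Fin n)) ∈ Set.range (fun a => ((g' a) : Fin n)) :=
      hv ▸ Set.mem_range_self a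
    have haa : a' = a := by
      have := congrArg f ha'
      rwa [fg g', fg g] at this
    exact Subtype.ext (by rw [← ha', haa])
  have hfiber : ∀ a : α, (n / h) ≤ Nat.card {v : Fin n // f v = a} := by
    intro a
    have hlt : ∀ i : Fin (n / h), (eα a).1 + i.1 * h < n := by
      intro i
      calc (eα a).1 + i.1 * h < h + i.1 * h := Nat.add_lt_add_right (eα a).2 _
        _ = (i.1 + 1) * h := by ring
        _ ≤ (n / h) * h := Nat.mul_le_mul_right h i.2
        _ ≤ n := Nat.div_mul_le_self n h
    have hmem : ∀ i : Fin (n / h), f ⟨(eα a).1 + i.1 * h, hlt i⟩ = a := by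
      intro i
      show eα.symm ⟨((eα a).1 + i.1 * h) % h, _⟩ = a
      have hm : ((eα a).1 + i.1 * h) % h = (eα a).1 := by
        rw [Nat.add_mul_mod_self_right]
        exact Nat.mod_eq_of_lt (eα a).2
      rw [Equiv.symm_apply_eq]
      exact Fin.ext hm
    have hinj : Function.Injective (fun i : Fin (n / h) =>
        (⟨⟨(eα a).1 + i.1 * h, hlt i⟩, hmem i⟩ : {v : Fin n // f v = a})) := by
      intro i j hij
      have h1 : (eα a).1 + i.1 * h = (eα a).1 + j.1 * h :=
        congrArg (fun x : {v : Fin n // f v = a} => x.1.1) hij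
      have h2 : i.1 * h = j.1 * h := by omega
      exact Fin.ext (Nat.eq_of_mul_eq_mul_right hh h2)
    calc n / h = Nat.card (Fin (n / h)) := by simp
      _ ≤ _ := Nat.card_le_card_of_injective _ hinj
  have hT : (n / h) ^ h ≤ Nat.card (∀ a : α, {v : Fin n // f v = a}) := by
    rw [Nat.card_pi]
    calc (n / h) ^ h = ∏ _a : α, (n / h) := by
          rw [Finset.prod_const, Finset.card_univ]
      _ ≤ ∏ a : α, Nat.card {v : Fin n // f v = a} :=
          Finset.prod_le_prod' (fun a _ => hfiber a)
  have hcount : (n / h) ^ h ≤ niceCopyCount H F Gn :=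
    le_trans hT (Nat.card_le_card_of_injective _ hpack)
  exact le_trans hcount (le_csSup (exRe_bddAbove n H F) ⟨Gn, rfl⟩)

/-- If `|V(H)| ≥ |V(F)|` and `H` does not contain `F`, then
`ex_re(n,H,F) = Θ(n^{|V(H)|})`. -/
theorem exRe_theta_of_free {α β : Type*} [Fintype α] [Fintype β]
    (H : SimpleGraph α) (F : SimpleGraph β)
    (hcard : Fintype.card β ≤ Fintype.card α)
    (hfree : FreeOf F H) :
    ∃ c C : ℝ, 0 < c ∧ 0 < C ∧ ∃ N : ℕ, ∀ n : ℕ, N ≤ n →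
      c * (n : ℝ) ^ (Fintype.card α) ≤ (exRe n H F : ℝ) ∧
      (exRe n H F : ℝ) ≤ C * (n : ℝ) ^ (Fintype.card α) := by
  have hb : 0 < Fintype.card β := card_beta_pos hfree
  set h := Fintype.card α with hdef
  have hh : 0 < h := lt_of_lt_of_le hb hcard
  have hhr : (0:ℝ) < h := by exact_mod_cast hh
  set M := Nat.card (Fin h → Fin h → Prop) with hMdef
  have hMpos : 0 < M := Nat.card_pos
  refine ⟨(1 / (2 * (h:ℝ))) ^ h, M, pow_pos (div_pos one_pos (by linarith)) h,
    by exact_mod_cast hMpos, 2 * h, ?_⟩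
  intro n hn
  constructor
  · have hnat : (n / h) ^ h ≤ exRe n H F := lower_bound H F hcard hfree hb n
    have hdiv : (n : ℝ) / (2 * h) ≤ ((n / h : ℕ) : ℝ) := by
      rw [div_le_iff₀ (by linarith)]
      have h1 : n < h * (n / h) + h := by
        have h2 := Nat.div_add_mod n h
        have h3 := Nat.mod_lt n hh
        omega
      have h2 : (n:ℝ) ≤ (h:ℝ) * ((n / h : ℕ):ℝ) + h := by exact_mod_cast h1.le
      have h3 : 2 * (h:ℝ) ≤ n := by exact_mod_cast hn
      have h4 : (0:ℝ) ≤ ((n / h : ℕ):ℝ) := Nat.cast_nonneg _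
      nlinarith
    calc (1 / (2 * (h:ℝ))) ^ h * (n:ℝ) ^ h = ((n:ℝ) / (2 * h)) ^ h := by
          rw [← mul_pow]; congr 1; ring
      _ ≤ ((n / h : ℕ) : ℝ) ^ h := pow_le_pow_left₀ (by positivity) hdiv h
      _ = (((n / h) ^ h : ℕ) : ℝ) := by push_cast; ring
      _ ≤ (exRe n H F : ℝ) := Nat.cast_le.mpr hnat
  · calc (exRe n H F : ℝ) ≤ ((n ^ h * M : ℕ) : ℝ) := Nat.cast_le.mpr (exRe_le n H F)
      _ = (M : ℝ) * (n : ℝ) ^ h := by push_cast; ring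
end

section
/- Let H_1,…,H_ℓ and H'_1,…,H'_m be complete multipartite graphs, let k_1,…,k_ℓ be positive integers, and let α_1,…,α_ℓ ≥ 0 and β_1,…,β_m ≥ 0 be real weights. For an n-vertex graph G define x(G) = Σ_{i=1}^{ℓ} α_i · N_re(H_i, K_{k_i+1}, G) + Σ_{j=1}^{m} β_j · N(H'_j, G). Then for every n, the maximum of x(G) over n-vertex graphs G is attained by a complete multipartite graph T. -/
open SimpleGraph

/-- `G` is complete multipartite: non-adjacency is transitive, i.e. the vertex set is
partitioned into classes of mutually non-adjacent vertices, with vertices of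
different classes adjacent. -/
def IsCompleteMultipartite {V : Type*} (G : SimpleGraph V) : Prop :=
  ∀ u v w : V, ¬ G.Adj u v → ¬ G.Adj v w → ¬ G.Adj u w

namespace Zyk

variable {n : ℕ}

instance fin_subgraph (G : SimpleGraph (Fin n)) : Finite G.Subgraph := by
  apply Finite.of_injective (fun A => (A.verts, A.Adj))
  intro A B h
  exact SimpleGraph.Subgraph.ext (congrArg Prod.fst h) (congrArg Prod.snd h)

instance fin_graphs : Finite (SimpleGraph (Fin n)) :=
  Finite.of_injective (fun G => G.Adj) (fun G G' h => SimpleGraph.ext h)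

/-- Zykov symmetrization: `u`'s adjacency replaced by that of `v`. -/
def symG (G : SimpleGraph (Fin n)) (u v : Fin n) : SimpleGraph (Fin n) where
  Adj x y := x ≠ y ∧ ((x = u ∧ y ≠ v ∧ G.Adj v y) ∨ (y = u ∧ x ≠ v ∧ G.Adj v x) ∨
      (x ≠ u ∧ y ≠ u ∧ G.Adj x y))
  symm := by
    constructor
    rintro x y ⟨hxy, h⟩
    refine ⟨hxy.symm, ?_⟩
    rcases h with h | h | h
    · exact Or.inr (Or.inl h)
    · exact Or.inl h
    · exact Or.inr (Or.inr ⟨h.2.1, h.1, h.2.2.symm⟩)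
  loopless := ⟨fun x h => h.1 rfl⟩

variable {G : SimpleGraph (Fin n)} {u v : Fin n}

lemma symG_adj_of_ne {x y : Fin n} (hx : x ≠ u) (hy : y ≠ u) :
    (symG G u v).Adj x y ↔ G.Adj x y := by
  constructor
  · rintro ⟨hxy, h | h | h⟩
    · exact absurd h.1 hx
    · exact absurd h.1 hy
    · exact h.2.2
  · intro h
    exact ⟨h.ne, Or.inr (Or.inr ⟨hx, hy, h⟩)⟩

lemma symG_adj_u (hadj : ¬ G.Adj u v) {y : Fin n} :
    (symG G u v).Adj u y ↔ y ≠ v ∧ G.Adj v y := by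
  constructor
  · rintro ⟨hxy, h | h | h⟩
    · exact h.2
    · exact absurd h.2.2.symm hadj
    · exact absurd rfl h.1
  · rintro ⟨hyv, hvy⟩
    refine ⟨fun h => hadj (h ▸ hvy.symm), Or.inl ⟨rfl, hyv, hvy⟩⟩

lemma symG_not_adj : ¬ (symG G u v).Adj u v := by
  rintro ⟨hne, h | h | h⟩
  · exact h.2.1 rfl
  · exact hne h.1.symm
  · exact h.1 rfl

end Zyk

namespace Zyk

open SimpleGraph

variable {n : ℕ}

/-- Transfer of a subgraph of `G` to a subgraph of `G'` along a permutation. -/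
def trans {G G' : SimpleGraph (Fin n)} (σ : Equiv.Perm (Fin n)) (A : G.Subgraph)
    (h : ∀ x y, A.Adj x y → G'.Adj (σ x) (σ y)) : G'.Subgraph where
  verts := σ '' A.verts
  Adj x y := A.Adj (σ.symm x) (σ.symm y)
  adj_sub := fun {x y} ha => by simpa using h _ _ ha
  edge_vert := fun {x y} ha => ⟨σ.symm x, A.edge_vert ha, Equiv.apply_symm_apply σ x⟩
  symm := ⟨fun x y ha => A.adj_symm ha⟩

variable {G G' : SimpleGraph (Fin n)} {σ : Equiv.Perm (Fin n)} {A : G.Subgraph}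

lemma mem_trans_verts (h : ∀ x y, A.Adj x y → G'.Adj (σ x) (σ y)) {x : Fin n} :
    x ∈ (trans σ A h).verts ↔ σ.symm x ∈ A.verts :=
  Set.mem_image_equiv

lemma trans_adj (h : ∀ x y, A.Adj x y → G'.Adj (σ x) (σ y)) {x y : Fin n} :
    (trans σ A h).Adj x y ↔ A.Adj (σ.symm x) (σ.symm y) := Iff.rfl

/-- The transferred subgraph has the same coercion graph. -/
noncomputable def transIso (h : ∀ x y, A.Adj x y → G'.Adj (σ x) (σ y)) :
    A.coe ≃g (trans σ A h).coe where
  toFun a := ⟨σ a, ⟨a, a.2, rfl⟩⟩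
  invFun b := ⟨σ.symm b, (mem_trans_verts h).mp b.2⟩
  left_inv a := by simp
  right_inv b := by simp
  map_rel_iff' := by
    intro a b
    show A.Adj (σ.symm (σ a)) (σ.symm (σ b)) ↔ A.Adj a b
    simp [trans, SimpleGraph.Subgraph.coe_adj]

lemma trans_isCopyOf {W : Type*} {H : SimpleGraph W}
    (h : ∀ x y, A.Adj x y → G'.Adj (σ x) (σ y)) (hA : A.IsCopyOf H) :
    (trans σ A h).IsCopyOf H := by
  obtain ⟨f⟩ := hA
  exact ⟨(transIso h).symm.trans f⟩

lemma trans_inj {A B : G.Subgraph} (hA : ∀ x y, A.Adj x y → G'.Adj (σ x) (σ y))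
    (hB : ∀ x y, B.Adj x y → G'.Adj (σ x) (σ y)) (h : trans σ A hA = trans σ B hB) :
    A = B := by
  apply SimpleGraph.Subgraph.ext
  · have := congrArg SimpleGraph.Subgraph.verts h
    simpa [trans, Set.image_eq_image σ.injective] using this
  · have := congrArg SimpleGraph.Subgraph.Adj h
    funext x y
    exact propext (by simpa [trans] using congrFun (congrFun this (σ x)) (σ y))

lemma card_le_trans (σ : Equiv.Perm (Fin n)) (P : G.Subgraph → Prop) (P' : G'.Subgraph → Prop)
    (hle : ∀ A, P A → ∀ x y, A.Adj x y → G'.Adj (σ x) (σ y))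
    (hpres : ∀ A (h : P A), P' (trans σ A (hle A h))) :
    Nat.card {A : G.Subgraph // P A} ≤ Nat.card {A : G'.Subgraph // P' A} := by
  apply Nat.card_le_card_of_injective
    (fun A => (⟨trans σ A.1 (hle A.1 A.2), hpres A.1 A.2⟩ : {A : G'.Subgraph // P' A}))
  rintro ⟨A, hA⟩ ⟨B, hB⟩ hEq
  simp only [Subtype.mk.injEq] at hEq ⊢
  exact trans_inj _ _ hEq

lemma card_congr_iff {α : Type*} {P Q : α → Prop} (h : ∀ x, P x ↔ Q x) :
    Nat.card {x // P x} = Nat.card {x // Q x} :=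
  Nat.card_congr (Equiv.subtypeEquivRight h)

lemma card_split {α : Type*} [Finite α] (R p : α → Prop) :
    Nat.card {x // R x} = Nat.card {x : α // R x ∧ p x} + Nat.card {x // R x ∧ ¬ p x} := by
  classical
  rw [← Nat.card_sum]
  apply Nat.card_congr
  refine ⟨fun x => if h : p x then .inl ⟨x, x.2, h⟩ else .inr ⟨x, x.2, h⟩,
    Sum.elim (fun y => ⟨y.1, y.2.1⟩) (fun y => ⟨y.1, y.2.1⟩), ?_, ?_⟩
  · intro x; by_cases h : p x <;> simp [h]
  · rintro (y | y)
    · simp [y.2.2]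
    · simp [y.2.2]

lemma card_split4 {α : Type*} [Finite α] (R p q : α → Prop) :
    Nat.card {x // R x} =
      Nat.card {x : α // R x ∧ (p x ∧ q x)} + Nat.card {x : α // R x ∧ (p x ∧ ¬ q x)} +
      Nat.card {x : α // R x ∧ (¬ p x ∧ q x)} + Nat.card {x : α // R x ∧ (¬ p x ∧ ¬ q x)} := by
  rw [card_split R p, card_split (fun x => R x ∧ p x) q, card_split (fun x => R x ∧ ¬ p x) q]
  rw [card_congr_iff (Q := fun x => R x ∧ (p x ∧ q x)) (fun x => by tauto),
    card_congr_iff (P := fun x => (R x ∧ p x) ∧ ¬ q x) (Q := fun x => R x ∧ (p x ∧ ¬ q x))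
      (fun x => by tauto),
    card_congr_iff (P := fun x => (R x ∧ ¬ p x) ∧ q x) (Q := fun x => R x ∧ (¬ p x ∧ q x))
      (fun x => by tauto),
    card_congr_iff (P := fun x => (R x ∧ ¬ p x) ∧ ¬ q x) (Q := fun x => R x ∧ (¬ p x ∧ ¬ q x))
      (fun x => by tauto)]
  omega

end Zyk

namespace Zyk

open SimpleGraph Equiv

variable {n : ℕ} {G : SimpleGraph (Fin n)} {u v : Fin n}

lemma cm_of_iso {V' W : Type*} {G₁ : SimpleGraph V'} {H : SimpleGraph W} (f : G₁ ≃g H)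
    (h : _root_.IsCompleteMultipartite H) : _root_.IsCompleteMultipartite G₁ := by
  intro a b c hab hbc hac
  exact h (f a) (f b) (f c) (fun hc => hab (f.map_rel_iff.mp hc))
    (fun hc => hbc (f.map_rel_iff.mp hc)) (f.map_rel_iff.mpr hac)

lemma copy_cm {W : Type*} {G₁ : SimpleGraph (Fin n)} {A : G₁.Subgraph} {H : SimpleGraph W}
    (hA : A.IsCopyOf H) (hH : _root_.IsCompleteMultipartite H) : _root_.IsCompleteMultipartite A.coe := by
  obtain ⟨f⟩ := hA
  exact cm_of_iso f hH

lemma copy_complete_adj {G₁ : SimpleGraph (Fin n)} {B : G₁.Subgraph} {r : ℕ}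
    (hB : B.IsCopyOf (completeGraph (Fin r))) {x y : Fin n} (hx : x ∈ B.verts)
    (hy : y ∈ B.verts) (hxy : x ≠ y) : B.Adj x y := by
  obtain ⟨f⟩ := hB
  have : (completeGraph (Fin r)).Adj (f ⟨x, hx⟩) (f ⟨y, hy⟩) := by
    show f ⟨x, hx⟩ ≠ f ⟨y, hy⟩
    intro hc
    exact hxy (by simpa using congrArg Subtype.val (f.toEquiv.injective hc))
  exact f.map_rel_iff.mp this

lemma no_both {B : (symG G u v).Subgraph} {r : ℕ}
    (hB : B.IsCopyOf (completeGraph (Fin r))) (huv : u ≠ v) (hu : u ∈ B.verts) :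
    v ∉ B.verts := fun hv => symG_not_adj (B.adj_sub (copy_complete_adj hB hu hv huv))

/- Adjacency-transfer lemmas. -/

lemma up_id (A : G.Subgraph) (hu : u ∉ A.verts) :
    ∀ x y, A.Adj x y → (symG G u v).Adj ((1 : Equiv.Perm (Fin n)) x) ((1 : Equiv.Perm (Fin n)) y) := by
  intro x y ha
  have hx : x ≠ u := fun h => hu (h ▸ A.edge_vert ha)
  have hy : y ≠ u := fun h => hu (h ▸ A.edge_vert (A.adj_symm ha))
  simpa using (symG_adj_of_ne hx hy).mpr (A.adj_sub ha)

lemma up_swap (hadj : ¬ G.Adj u v) (A : G.Subgraph) (hu : u ∉ A.verts) :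
    ∀ x y, A.Adj x y → (symG G u v).Adj (Equiv.swap u v x) (Equiv.swap u v y) := by
  intro x y ha
  have hx : x ≠ u := fun h => hu (h ▸ A.edge_vert ha)
  have hy : y ≠ u := fun h => hu (h ▸ A.edge_vert (A.adj_symm ha))
  have hga := A.adj_sub ha
  by_cases hxv : x = v
  · have hyv : y ≠ v := fun h => (A.adj_symm ha).ne (h.trans hxv.symm)
    rw [hxv, Equiv.swap_apply_right, Equiv.swap_apply_of_ne_of_ne hy hyv]
    exact (symG_adj_u hadj).mpr ⟨hyv, hxv ▸ hga⟩
  · by_cases hyv : y = v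
    · rw [hyv, Equiv.swap_apply_right, Equiv.swap_apply_of_ne_of_ne hx hxv]
      exact ((symG G u v).adj_symm ((symG_adj_u hadj).mpr ⟨hxv, hyv ▸ hga.symm⟩))
    · rw [Equiv.swap_apply_of_ne_of_ne hx hxv, Equiv.swap_apply_of_ne_of_ne hy hyv]
      exact (symG_adj_of_ne hx hy).mpr hga

lemma up_mp (hadj : ¬ G.Adj u v) (A : G.Subgraph) (hmp : _root_.IsCompleteMultipartite A.coe)
    (hv : v ∈ A.verts) :
    ∀ x y, A.Adj x y → (symG G u v).Adj ((1 : Equiv.Perm (Fin n)) x) ((1 : Equiv.Perm (Fin n)) y) := by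
  have key : ∀ y, A.Adj u y → (symG G u v).Adj u y := by
    intro y ha
    have hyu : y ≠ u := (A.adj_symm ha).ne
    have hyv : y ≠ v := fun h => hadj (h ▸ A.adj_sub ha)
    have hAvy : A.Adj v y := by
      by_contra hc
      have h1 : ¬ A.coe.Adj ⟨u, A.edge_vert ha⟩ ⟨v, hv⟩ := by
        simp only [SimpleGraph.Subgraph.coe_adj]
        exact fun h2 => hadj (A.adj_sub h2)
      have h2 : ¬ A.coe.Adj ⟨v, hv⟩ ⟨y, A.edge_vert (A.adj_symm ha)⟩ := by
        simp only [SimpleGraph.Subgraph.coe_adj]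
        exact hc
      exact (hmp _ _ _ h1 h2) (by simpa only [SimpleGraph.Subgraph.coe_adj] using ha)
    exact (symG_adj_u hadj).mpr ⟨hyv, A.adj_sub hAvy⟩
  intro x y ha
  simp only [Equiv.Perm.one_apply]
  by_cases hx : x = u
  · exact hx ▸ key y (hx ▸ ha)
  · by_cases hy : y = u
    · exact ((symG G u v).adj_symm (hy ▸ key x (hy ▸ A.adj_symm ha)))
    · exact (symG_adj_of_ne hx hy).mpr (A.adj_sub ha)

lemma down_id (B : (symG G u v).Subgraph) (hu : u ∉ B.verts) :
    ∀ x y, B.Adj x y → G.Adj ((1 : Equiv.Perm (Fin n)) x) ((1 : Equiv.Perm (Fin n)) y) := by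
  intro x y hb
  have hx : x ≠ u := fun h => hu (h ▸ B.edge_vert hb)
  have hy : y ≠ u := fun h => hu (h ▸ B.edge_vert (B.adj_symm hb))
  simpa using (symG_adj_of_ne hx hy).mp (B.adj_sub hb)

lemma down_swap (hadj : ¬ G.Adj u v) (B : (symG G u v).Subgraph) (hv : v ∉ B.verts) :
    ∀ x y, B.Adj x y → G.Adj (Equiv.swap u v x) (Equiv.swap u v y) := by
  intro x y hb
  have hx : x ≠ v := fun h => hv (h ▸ B.edge_vert hb)
  have hy : y ≠ v := fun h => hv (h ▸ B.edge_vert (B.adj_symm hb))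
  have hgb := B.adj_sub hb
  by_cases hxu : x = u
  · have hyu : y ≠ u := fun h => (B.adj_symm hb).ne (h.trans hxu.symm)
    rw [hxu, Equiv.swap_apply_left, Equiv.swap_apply_of_ne_of_ne hyu hy]
    exact ((symG_adj_u hadj).mp (hxu ▸ hgb)).2
  · by_cases hyu : y = u
    · rw [hyu, Equiv.swap_apply_left, Equiv.swap_apply_of_ne_of_ne hxu hx]
      exact (((symG_adj_u hadj).mp (hyu ▸ hgb.symm)).2).symm
    · rw [Equiv.swap_apply_of_ne_of_ne hxu hx, Equiv.swap_apply_of_ne_of_ne hyu hy]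
      exact (symG_adj_of_ne hxu hyu).mp hgb

end Zyk

namespace Zyk

open SimpleGraph

variable {n : ℕ} {G G' : SimpleGraph (Fin n)} {u v : Fin n}

lemma mem_trans_one {A : G.Subgraph}
    (h : ∀ x y, A.Adj x y → G'.Adj ((1 : Equiv.Perm (Fin n)) x) ((1 : Equiv.Perm (Fin n)) y))
    {x : Fin n} : x ∈ (trans 1 A h).verts ↔ x ∈ A.verts := by
  rw [mem_trans_verts]; exact Iff.rfl

lemma mem_trans_swap {A : G.Subgraph}
    (h : ∀ x y, A.Adj x y → G'.Adj (Equiv.swap u v x) (Equiv.swap u v y))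
    {x : Fin n} : x ∈ (trans (Equiv.swap u v) A h).verts ↔ Equiv.swap u v x ∈ A.verts := by
  rw [mem_trans_verts, Equiv.symm_swap]

variable {r : ℕ}

lemma nice_up_id (huv : u ≠ v) (hadj : ¬ G.Adj u v) (A : G.Subgraph) (hu : u ∉ A.verts)
    (hn : A.Nice (completeGraph (Fin r)))
    (h : ∀ x y, A.Adj x y → (symG G u v).Adj ((1 : Equiv.Perm (Fin n)) x) ((1 : Equiv.Perm (Fin n)) y)) :
    (trans 1 A h).Nice (completeGraph (Fin r)) := by
  intro B hB hal
  by_cases hub : u ∈ B.verts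
  · have hvb : v ∉ B.verts := no_both hB huv hub
    apply hn (trans (Equiv.swap u v) B (down_swap hadj B hvb)) (trans_isCopyOf _ hB)
    rcases hal with h1 | h1
    · left
      intro x hx
      rw [mem_trans_swap]
      have hxB : x ∈ B.verts := h1 ((mem_trans_one h).mpr hx)
      have hxu : x ≠ u := fun e => hu (e ▸ hx)
      have hxv : x ≠ v := fun e => hvb (e ▸ hxB)
      rwa [Equiv.swap_apply_of_ne_of_ne hxu hxv]
    · exact absurd ((mem_trans_one h).mp (h1 hub)) hu
  · apply hn (trans 1 B (down_id B hub)) (trans_isCopyOf _ hB)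
    rcases hal with h1 | h1
    · left; intro x hx
      rw [mem_trans_one]
      exact h1 ((mem_trans_one h).mpr hx)
    · right; intro x hx
      exact (mem_trans_one h).mp (h1 ((mem_trans_one _).mp hx))

lemma nice_up_swap (huv : u ≠ v) (hadj : ¬ G.Adj u v) (A : G.Subgraph) (hu : u ∉ A.verts)
    (hn : A.Nice (completeGraph (Fin r)))
    (h : ∀ x y, A.Adj x y → (symG G u v).Adj (Equiv.swap u v x) (Equiv.swap u v y)) :
    (trans (Equiv.swap u v) A h).Nice (completeGraph (Fin r)) := by
  intro B hB hal
  by_cases hvb : v ∈ B.verts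
  · have hub : u ∉ B.verts := fun hub => (no_both hB huv hub) hvb
    apply hn (trans 1 B (down_id B hub)) (trans_isCopyOf _ hB)
    rcases hal with h1 | h1
    · left
      intro x hx
      rw [mem_trans_one]
      have hsw : Equiv.swap u v x ∈ B.verts :=
        h1 ((mem_trans_swap h).mpr (by rwa [Equiv.swap_apply_self]))
      rcases eq_or_ne x u with rfl | hxu
      · exact absurd hx hu
      rcases eq_or_ne x v with rfl | hxv
      · rw [Equiv.swap_apply_right] at hsw
        exact absurd hsw hub
      rwa [Equiv.swap_apply_of_ne_of_ne hxu hxv] at hsw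
    · have h2 := (mem_trans_swap h).mp (h1 hvb)
      rw [Equiv.swap_apply_right] at h2
      exact absurd h2 hu
  · apply hn (trans (Equiv.swap u v) B (down_swap hadj B hvb)) (trans_isCopyOf _ hB)
    rcases hal with h1 | h1
    · left; intro x hx
      rw [mem_trans_swap]
      exact h1 ((mem_trans_swap h).mpr (by rwa [Equiv.swap_apply_self]))
    · right; intro x hx
      have h3 := (mem_trans_swap h).mp (h1 ((mem_trans_swap _).mp hx))
      rwa [Equiv.swap_apply_self] at h3

lemma nice_up_mp (huv : u ≠ v) (hadj : ¬ G.Adj u v) (A : G.Subgraph) (hv : v ∈ A.verts)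
    (hn : A.Nice (completeGraph (Fin r)))
    (h : ∀ x y, A.Adj x y → (symG G u v).Adj ((1 : Equiv.Perm (Fin n)) x) ((1 : Equiv.Perm (Fin n)) y)) :
    (trans 1 A h).Nice (completeGraph (Fin r)) := by
  intro B hB hal
  by_cases hub : u ∈ B.verts
  · have hvb : v ∉ B.verts := no_both hB huv hub
    rcases hal with h1 | h1
    · exact absurd (h1 ((mem_trans_one h).mpr hv)) hvb
    · apply hn (trans (Equiv.swap u v) B (down_swap hadj B hvb)) (trans_isCopyOf _ hB)
      right; intro x hx
      have h2 := (mem_trans_swap _).mp hx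
      rcases eq_or_ne x v with rfl | hxv
      · exact hv
      rcases eq_or_ne x u with rfl | hxu
      · rw [Equiv.swap_apply_left] at h2
        exact absurd h2 hvb
      · rw [Equiv.swap_apply_of_ne_of_ne hxu hxv] at h2
        exact (mem_trans_one h).mp (h1 h2)
  · apply hn (trans 1 B (down_id B hub)) (trans_isCopyOf _ hB)
    rcases hal with h1 | h1
    · left; intro x hx
      rw [mem_trans_one]
      exact h1 ((mem_trans_one h).mpr hx)
    · right; intro x hx
      exact (mem_trans_one h).mp (h1 ((mem_trans_one _).mp hx))

end Zyk

namespace Zyk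

open SimpleGraph

variable {n : ℕ}

lemma key_plain {W : Type*} (H : SimpleGraph W) (hH : _root_.IsCompleteMultipartite H)
    (G : SimpleGraph (Fin n)) (u v : Fin n) (huv : u ≠ v) (hadj : ¬ G.Adj u v) :
    Nat.card {A : G.Subgraph // A.IsCopyOf H ∧ (u ∉ A.verts ∧ v ∉ A.verts)} +
      2 * Nat.card {A : G.Subgraph // A.IsCopyOf H ∧ (u ∉ A.verts ∧ v ∈ A.verts)} +
      Nat.card {A : G.Subgraph // A.IsCopyOf H ∧ (u ∈ A.verts ∧ v ∈ A.verts)}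
      ≤ _root_.copyCount H (symG G u v) := by
  have e : _root_.copyCount H (symG G u v) =
      Nat.card {A : (symG G u v).Subgraph // A.IsCopyOf H ∧ (u ∈ A.verts ∧ v ∈ A.verts)} +
      Nat.card {A : (symG G u v).Subgraph // A.IsCopyOf H ∧ (u ∈ A.verts ∧ v ∉ A.verts)} +
      Nat.card {A : (symG G u v).Subgraph // A.IsCopyOf H ∧ (u ∉ A.verts ∧ v ∈ A.verts)} +
      Nat.card {A : (symG G u v).Subgraph // A.IsCopyOf H ∧ (u ∉ A.verts ∧ v ∉ A.verts)} :=
    card_split4 _ _ _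
  have h1 : Nat.card {A : G.Subgraph // A.IsCopyOf H ∧ (u ∈ A.verts ∧ v ∈ A.verts)} ≤
      Nat.card {A : (symG G u v).Subgraph // A.IsCopyOf H ∧ (u ∈ A.verts ∧ v ∈ A.verts)} := by
    apply card_le_trans 1 _ _ (fun A hA => up_mp hadj A (copy_cm hA.1 hH) hA.2.2)
    intro A hA
    exact ⟨trans_isCopyOf _ hA.1, (mem_trans_one _).mpr hA.2.1, (mem_trans_one _).mpr hA.2.2⟩
  have h2 : Nat.card {A : G.Subgraph // A.IsCopyOf H ∧ (u ∉ A.verts ∧ v ∈ A.verts)} ≤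
      Nat.card {A : (symG G u v).Subgraph // A.IsCopyOf H ∧ (u ∈ A.verts ∧ v ∉ A.verts)} := by
    apply card_le_trans (Equiv.swap u v) _ _ (fun A hA => up_swap hadj A hA.2.1)
    intro A hA
    refine ⟨trans_isCopyOf _ hA.1, ?_, ?_⟩
    · rw [mem_trans_swap, Equiv.swap_apply_left]
      exact hA.2.2
    · intro hc
      rw [mem_trans_swap, Equiv.swap_apply_right] at hc
      exact hA.2.1 hc
  have h3 : Nat.card {A : G.Subgraph // A.IsCopyOf H ∧ (u ∉ A.verts ∧ v ∈ A.verts)} ≤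
      Nat.card {A : (symG G u v).Subgraph // A.IsCopyOf H ∧ (u ∉ A.verts ∧ v ∈ A.verts)} := by
    apply card_le_trans 1 _ _ (fun A hA => up_id A hA.2.1)
    intro A hA
    refine ⟨trans_isCopyOf _ hA.1, ?_, (mem_trans_one _).mpr hA.2.2⟩
    intro hc
    exact hA.2.1 ((mem_trans_one _).mp hc)
  have h4 : Nat.card {A : G.Subgraph // A.IsCopyOf H ∧ (u ∉ A.verts ∧ v ∉ A.verts)} ≤
      Nat.card {A : (symG G u v).Subgraph // A.IsCopyOf H ∧ (u ∉ A.verts ∧ v ∉ A.verts)} := by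
    apply card_le_trans 1 _ _ (fun A hA => up_id A hA.2.1)
    intro A hA
    refine ⟨trans_isCopyOf _ hA.1, ?_, ?_⟩
    · intro hc
      exact hA.2.1 ((mem_trans_one _).mp hc)
    · intro hc
      exact hA.2.2 ((mem_trans_one _).mp hc)
  omega

lemma key_nice {W : Type*} {r : ℕ} (H : SimpleGraph W) (hH : _root_.IsCompleteMultipartite H)
    (G : SimpleGraph (Fin n)) (u v : Fin n) (huv : u ≠ v) (hadj : ¬ G.Adj u v) :
    Nat.card {A : G.Subgraph // (A.IsCopyOf H ∧ A.Nice (completeGraph (Fin r))) ∧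
        (u ∉ A.verts ∧ v ∉ A.verts)} +
      2 * Nat.card {A : G.Subgraph // (A.IsCopyOf H ∧ A.Nice (completeGraph (Fin r))) ∧
        (u ∉ A.verts ∧ v ∈ A.verts)} +
      Nat.card {A : G.Subgraph // (A.IsCopyOf H ∧ A.Nice (completeGraph (Fin r))) ∧
        (u ∈ A.verts ∧ v ∈ A.verts)}
      ≤ niceCopyCount H (completeGraph (Fin r)) (symG G u v) := by
  have e : niceCopyCount H (completeGraph (Fin r)) (symG G u v) =
      Nat.card {A : (symG G u v).Subgraph // (A.IsCopyOf H ∧ A.Nice (completeGraph (Fin r))) ∧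
        (u ∈ A.verts ∧ v ∈ A.verts)} +
      Nat.card {A : (symG G u v).Subgraph // (A.IsCopyOf H ∧ A.Nice (completeGraph (Fin r))) ∧
        (u ∈ A.verts ∧ v ∉ A.verts)} +
      Nat.card {A : (symG G u v).Subgraph // (A.IsCopyOf H ∧ A.Nice (completeGraph (Fin r))) ∧
        (u ∉ A.verts ∧ v ∈ A.verts)} +
      Nat.card {A : (symG G u v).Subgraph // (A.IsCopyOf H ∧ A.Nice (completeGraph (Fin r))) ∧
        (u ∉ A.verts ∧ v ∉ A.verts)} :=
    card_split4 _ _ _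
  have h1 : Nat.card {A : G.Subgraph // (A.IsCopyOf H ∧ A.Nice (completeGraph (Fin r))) ∧
        (u ∈ A.verts ∧ v ∈ A.verts)} ≤
      Nat.card {A : (symG G u v).Subgraph // (A.IsCopyOf H ∧ A.Nice (completeGraph (Fin r))) ∧
        (u ∈ A.verts ∧ v ∈ A.verts)} := by
    apply card_le_trans 1 _ _ (fun A hA => up_mp hadj A (copy_cm hA.1.1 hH) hA.2.2)
    intro A hA
    exact ⟨⟨trans_isCopyOf _ hA.1.1, nice_up_mp huv hadj A hA.2.2 hA.1.2 _⟩,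
      (mem_trans_one _).mpr hA.2.1, (mem_trans_one _).mpr hA.2.2⟩
  have h2 : Nat.card {A : G.Subgraph // (A.IsCopyOf H ∧ A.Nice (completeGraph (Fin r))) ∧
        (u ∉ A.verts ∧ v ∈ A.verts)} ≤
      Nat.card {A : (symG G u v).Subgraph // (A.IsCopyOf H ∧ A.Nice (completeGraph (Fin r))) ∧
        (u ∈ A.verts ∧ v ∉ A.verts)} := by
    apply card_le_trans (Equiv.swap u v) _ _ (fun A hA => up_swap hadj A hA.2.1)
    intro A hA
    refine ⟨⟨trans_isCopyOf _ hA.1.1, nice_up_swap huv hadj A hA.2.1 hA.1.2 _⟩, ?_, ?_⟩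
    · rw [mem_trans_swap, Equiv.swap_apply_left]
      exact hA.2.2
    · intro hc
      rw [mem_trans_swap, Equiv.swap_apply_right] at hc
      exact hA.2.1 hc
  have h3 : Nat.card {A : G.Subgraph // (A.IsCopyOf H ∧ A.Nice (completeGraph (Fin r))) ∧
        (u ∉ A.verts ∧ v ∈ A.verts)} ≤
      Nat.card {A : (symG G u v).Subgraph // (A.IsCopyOf H ∧ A.Nice (completeGraph (Fin r))) ∧
        (u ∉ A.verts ∧ v ∈ A.verts)} := by
    apply card_le_trans 1 _ _ (fun A hA => up_id A hA.2.1)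
    intro A hA
    refine ⟨⟨trans_isCopyOf _ hA.1.1, nice_up_id huv hadj A hA.2.1 hA.1.2 _⟩, ?_,
      (mem_trans_one _).mpr hA.2.2⟩
    intro hc
    exact hA.2.1 ((mem_trans_one _).mp hc)
  have h4 : Nat.card {A : G.Subgraph // (A.IsCopyOf H ∧ A.Nice (completeGraph (Fin r))) ∧
        (u ∉ A.verts ∧ v ∉ A.verts)} ≤
      Nat.card {A : (symG G u v).Subgraph // (A.IsCopyOf H ∧ A.Nice (completeGraph (Fin r))) ∧
        (u ∉ A.verts ∧ v ∉ A.verts)} := by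
    apply card_le_trans 1 _ _ (fun A hA => up_id A hA.2.1)
    intro A hA
    refine ⟨⟨trans_isCopyOf _ hA.1.1, nice_up_id huv hadj A hA.2.1 hA.1.2 _⟩, ?_, ?_⟩
    · intro hc
      exact hA.2.1 ((mem_trans_one _).mp hc)
    · intro hc
      exact hA.2.2 ((mem_trans_one _).mp hc)
  omega

end Zyk

namespace Zyk

open SimpleGraph

variable {n : ℕ}

lemma key2_plain {W : Type*} (H : SimpleGraph W) (hH : _root_.IsCompleteMultipartite H)
    (G : SimpleGraph (Fin n)) (u v : Fin n) (huv : u ≠ v) (hadj : ¬ G.Adj u v) :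
    2 * _root_.copyCount H G ≤ _root_.copyCount H (symG G u v) + _root_.copyCount H (symG G v u) := by
  have e : _root_.copyCount H G =
      Nat.card {A : G.Subgraph // A.IsCopyOf H ∧ (u ∈ A.verts ∧ v ∈ A.verts)} +
      Nat.card {A : G.Subgraph // A.IsCopyOf H ∧ (u ∈ A.verts ∧ v ∉ A.verts)} +
      Nat.card {A : G.Subgraph // A.IsCopyOf H ∧ (u ∉ A.verts ∧ v ∈ A.verts)} +
      Nat.card {A : G.Subgraph // A.IsCopyOf H ∧ (u ∉ A.verts ∧ v ∉ A.verts)} :=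
    card_split4 _ _ _
  have k1 := key_plain H hH G u v huv hadj
  have k2 := key_plain H hH G v u huv.symm (fun hc => hadj hc.symm)
  have c1 : Nat.card {A : G.Subgraph // A.IsCopyOf H ∧ (v ∉ A.verts ∧ u ∉ A.verts)} =
      Nat.card {A : G.Subgraph // A.IsCopyOf H ∧ (u ∉ A.verts ∧ v ∉ A.verts)} :=
    card_congr_iff (fun A => by tauto)
  have c2 : Nat.card {A : G.Subgraph // A.IsCopyOf H ∧ (v ∉ A.verts ∧ u ∈ A.verts)} =
      Nat.card {A : G.Subgraph // A.IsCopyOf H ∧ (u ∈ A.verts ∧ v ∉ A.verts)} :=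
    card_congr_iff (fun A => by tauto)
  have c3 : Nat.card {A : G.Subgraph // A.IsCopyOf H ∧ (v ∈ A.verts ∧ u ∈ A.verts)} =
      Nat.card {A : G.Subgraph // A.IsCopyOf H ∧ (u ∈ A.verts ∧ v ∈ A.verts)} :=
    card_congr_iff (fun A => by tauto)
  rw [c1, c2, c3] at k2
  omega

lemma key2_nice {W : Type*} {r : ℕ} (H : SimpleGraph W) (hH : _root_.IsCompleteMultipartite H)
    (G : SimpleGraph (Fin n)) (u v : Fin n) (huv : u ≠ v) (hadj : ¬ G.Adj u v) :
    2 * niceCopyCount H (completeGraph (Fin r)) G ≤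
      niceCopyCount H (completeGraph (Fin r)) (symG G u v) +
      niceCopyCount H (completeGraph (Fin r)) (symG G v u) := by
  have e : niceCopyCount H (completeGraph (Fin r)) G =
      Nat.card {A : G.Subgraph // (A.IsCopyOf H ∧ A.Nice (completeGraph (Fin r))) ∧
        (u ∈ A.verts ∧ v ∈ A.verts)} +
      Nat.card {A : G.Subgraph // (A.IsCopyOf H ∧ A.Nice (completeGraph (Fin r))) ∧
        (u ∈ A.verts ∧ v ∉ A.verts)} +
      Nat.card {A : G.Subgraph // (A.IsCopyOf H ∧ A.Nice (completeGraph (Fin r))) ∧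
        (u ∉ A.verts ∧ v ∈ A.verts)} +
      Nat.card {A : G.Subgraph // (A.IsCopyOf H ∧ A.Nice (completeGraph (Fin r))) ∧
        (u ∉ A.verts ∧ v ∉ A.verts)} :=
    card_split4 _ _ _
  have k1 := key_nice (r := r) H hH G u v huv hadj
  have k2 := key_nice (r := r) H hH G v u huv.symm (fun hc => hadj hc.symm)
  have c1 : Nat.card {A : G.Subgraph // (A.IsCopyOf H ∧ A.Nice (completeGraph (Fin r))) ∧
        (v ∉ A.verts ∧ u ∉ A.verts)} =
      Nat.card {A : G.Subgraph // (A.IsCopyOf H ∧ A.Nice (completeGraph (Fin r))) ∧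
        (u ∉ A.verts ∧ v ∉ A.verts)} :=
    card_congr_iff (fun A => by tauto)
  have c2 : Nat.card {A : G.Subgraph // (A.IsCopyOf H ∧ A.Nice (completeGraph (Fin r))) ∧
        (v ∉ A.verts ∧ u ∈ A.verts)} =
      Nat.card {A : G.Subgraph // (A.IsCopyOf H ∧ A.Nice (completeGraph (Fin r))) ∧
        (u ∈ A.verts ∧ v ∉ A.verts)} :=
    card_congr_iff (fun A => by tauto)
  have c3 : Nat.card {A : G.Subgraph // (A.IsCopyOf H ∧ A.Nice (completeGraph (Fin r))) ∧
        (v ∈ A.verts ∧ u ∈ A.verts)} =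
      Nat.card {A : G.Subgraph // (A.IsCopyOf H ∧ A.Nice (completeGraph (Fin r))) ∧
        (u ∈ A.verts ∧ v ∈ A.verts)} :=
    card_congr_iff (fun A => by tauto)
  rw [c1, c2, c3] at k2
  omega

end Zyk

namespace Zyk

open SimpleGraph Finset

variable {n : ℕ}

open scoped Classical in
noncomputable def dd (G : SimpleGraph (Fin n)) (x : Fin n) : ℕ :=
  (Finset.univ.filter (fun y => G.Adj x y)).card

noncomputable def PP (G : SimpleGraph (Fin n)) : ℕ := ∑ x : Fin n, dd G x

variable {G : SimpleGraph (Fin n)} {u v : Fin n}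

open scoped Classical in
lemma dd_congr_off {G1 G2 : SimpleGraph (Fin n)} {x u : Fin n}
    (h : ∀ y, y ≠ u → (G1.Adj x y ↔ G2.Adj x y)) :
    dd G1 x + (if G2.Adj x u then 1 else 0) = dd G2 x + (if G1.Adj x u then 1 else 0) := by
  have key : ∀ (Gi : SimpleGraph (Fin n)),
      dd Gi x = ((Finset.univ.erase u).filter (fun y => Gi.Adj x y)).card
        + (if Gi.Adj x u then 1 else 0) := by
    intro Gi
    have hre : Finset.filter (fun y => Gi.Adj x y) Finset.univ =
        Finset.filter (fun y => Gi.Adj x y) (insert u (Finset.univ.erase u)) := by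
      rw [Finset.insert_erase (Finset.mem_univ u)]
    rw [dd, hre, Finset.filter_insert]
    split_ifs with hadj
    · rw [Finset.card_insert_of_notMem (fun hc => (Finset.mem_erase.mp
        (Finset.mem_of_mem_filter u hc)).1 rfl)]
    · omega
  have hfc : ((Finset.univ.erase u).filter (fun y => G1.Adj x y)).card =
      ((Finset.univ.erase u).filter (fun y => G2.Adj x y)).card := by
    congr 1
    apply Finset.filter_congr
    intro y hy
    exact h y (Finset.ne_of_mem_erase hy)
  rw [key G1, key G2, hfc]
  omega

open scoped Classical in
lemma dd_sym_off (hadj : ¬ G.Adj u v) {x : Fin n} (hx : x ≠ u) :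
    dd (symG G u v) x + (if G.Adj x u then 1 else 0) =
      dd G x + (if x ≠ v ∧ G.Adj v x then 1 else 0) := by
  have h := dd_congr_off (G1 := symG G u v) (G2 := G) (x := x) (u := u)
    (fun y hy => symG_adj_of_ne hx hy)
  have hiff : (symG G u v).Adj x u ↔ (x ≠ v ∧ G.Adj v x) := by
    rw [(symG G u v).adj_comm, symG_adj_u hadj]
  rw [if_congr hiff rfl rfl] at h
  exact h

lemma dd_sym_u (hadj : ¬ G.Adj u v) : dd (symG G u v) u = dd G v := by
  classical
  unfold dd
  congr 1
  apply Finset.filter_congr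
  intro y _
  rw [symG_adj_u hadj]
  exact ⟨fun h => h.2, fun h => ⟨h.ne', h⟩⟩

lemma dd_sym_v (hadj : ¬ G.Adj u v) (hvu : v ≠ u) : dd (symG G u v) v = dd G v := by
  classical
  have h := dd_sym_off (v := v) hadj hvu
  rw [if_neg (fun hc : G.Adj v u => hadj hc.symm), if_neg (fun hc => hc.1 rfl)] at h
  omega

lemma dd_sym_w (hadj : ¬ G.Adj u v) {w : Fin n} (hwu : w ≠ u)
    (hadjwu : G.Adj w u) (hnadjvw : ¬ G.Adj v w) :
    dd (symG G u v) w + 1 = dd G w := by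
  classical
  have h := dd_sym_off (x := w) hadj hwu
  rw [if_pos hadjwu, if_neg (fun hc : w ≠ v ∧ G.Adj v w => hnadjvw hc.2)] at h
  omega

lemma PP_sym (hadj : ¬ G.Adj u v) : PP (symG G u v) + 2 * dd G u = PP G + 2 * dd G v := by
  classical
  have h1 : ∑ x ∈ Finset.univ.erase u, (dd (symG G u v) x + (if G.Adj x u then 1 else 0)) =
      ∑ x ∈ Finset.univ.erase u, (dd G x + (if x ≠ v ∧ G.Adj v x then 1 else 0)) :=
    Finset.sum_congr rfl (fun x hx => dd_sym_off hadj (Finset.ne_of_mem_erase hx))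
  rw [Finset.sum_add_distrib, Finset.sum_add_distrib] at h1
  have h2 : ∑ x ∈ Finset.univ.erase u, (if G.Adj x u then 1 else 0) = dd G u := by
    rw [← Finset.card_filter]
    unfold dd
    congr 1
    ext y
    simp only [Finset.mem_filter, Finset.mem_erase, Finset.mem_univ, true_and, and_true]
    exact ⟨fun h => h.2.symm, fun h => ⟨h.ne', h.symm⟩⟩
  have h3 : ∑ x ∈ Finset.univ.erase u, (if x ≠ v ∧ G.Adj v x then 1 else 0) = dd G v := by
    rw [← Finset.card_filter]
    unfold dd
    congr 1
    ext y
    simp only [Finset.mem_filter, Finset.mem_erase, Finset.mem_univ, true_and, and_true]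
    constructor
    · exact fun h => h.2.2
    · intro h
      exact ⟨fun hc => hadj (hc ▸ h).symm, h.ne', h⟩
  have h4 : dd (symG G u v) u + ∑ x ∈ Finset.univ.erase u, dd (symG G u v) x = PP (symG G u v) :=
    Finset.add_sum_erase _ _ (Finset.mem_univ u)
  have h5 : dd G u + ∑ x ∈ Finset.univ.erase u, dd G x = PP G :=
    Finset.add_sum_erase _ _ (Finset.mem_univ u)
  have h6 := dd_sym_u (v := v) hadj
  omega

end Zyk

/-- Let `H_1,…,H_ℓ, H'_1,…,H'_m` be complete multipartite graphs, `k_i ≥ 1`, and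
`α_i, β_j ≥ 0`. Then `x(G) = Σ α_i N_re(H_i,K_{k_i+1},G) + Σ β_j N(H'_j,G)` is maximized
over `n`-vertex graphs by a complete multipartite graph. -/
theorem weighted_sum_maximized_by_completeMultipartite
    (l m : ℕ) (a : Fin l → ℕ) (b : Fin m → ℕ)
    (H : (i : Fin l) → SimpleGraph (Fin (a i)))
    (H' : (j : Fin m) → SimpleGraph (Fin (b j)))
    (hH : ∀ i, _root_.IsCompleteMultipartite (H i))
    (hH' : ∀ j, _root_.IsCompleteMultipartite (H' j))
    (k : Fin l → ℕ) (hk : ∀ i, 1 ≤ k i)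
    (α : Fin l → ℝ) (β : Fin m → ℝ) (hα : ∀ i, 0 ≤ α i) (hβ : ∀ j, 0 ≤ β j)
    (n : ℕ) :
    ∃ T : SimpleGraph (Fin n), _root_.IsCompleteMultipartite T ∧
      ∀ G : SimpleGraph (Fin n),
        (∑ i, α i * (niceCopyCount (H i) (completeGraph (Fin (k i + 1))) G : ℝ)
          + ∑ j, β j * (_root_.copyCount (H' j) G : ℝ))
        ≤ (∑ i, α i * (niceCopyCount (H i) (completeGraph (Fin (k i + 1))) T : ℝ)
          + ∑ j, β j * (_root_.copyCount (H' j) T : ℝ)) := by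
  classical
  set xf : SimpleGraph (Fin n) → ℝ := fun G =>
    (∑ i, α i * (niceCopyCount (H i) (completeGraph (Fin (k i + 1))) G : ℝ)
      + ∑ j, β j * (_root_.copyCount (H' j) G : ℝ)) with hxf
  -- the symmetrization inequality for the weighted sum
  have hsym : ∀ (G : SimpleGraph (Fin n)) (u v : Fin n), u ≠ v → ¬ G.Adj u v →
      2 * xf G ≤ xf (Zyk.symG G u v) + xf (Zyk.symG G v u) := by
    intro G u v huv hadj
    have step1 : ∀ i : Fin l,
        2 * (niceCopyCount (H i) (completeGraph (Fin (k i + 1))) G : ℝ) ≤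
        (niceCopyCount (H i) (completeGraph (Fin (k i + 1))) (Zyk.symG G u v) : ℝ) +
        (niceCopyCount (H i) (completeGraph (Fin (k i + 1))) (Zyk.symG G v u) : ℝ) := by
      intro i
      exact_mod_cast Zyk.key2_nice (r := k i + 1) (H i) (hH i) G u v huv hadj
    have step2 : ∀ j : Fin m,
        2 * (_root_.copyCount (H' j) G : ℝ) ≤
        (_root_.copyCount (H' j) (Zyk.symG G u v) : ℝ) + (_root_.copyCount (H' j) (Zyk.symG G v u) : ℝ) := by
      intro j
      exact_mod_cast Zyk.key2_plain (H' j) (hH' j) G u v huv hadj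
    have e1 : 2 * xf G =
        ∑ i, α i * (2 * (niceCopyCount (H i) (completeGraph (Fin (k i + 1))) G : ℝ))
          + ∑ j, β j * (2 * (_root_.copyCount (H' j) G : ℝ)) := by
      rw [hxf, mul_add, Finset.mul_sum, Finset.mul_sum]
      congr 1 <;> exact Finset.sum_congr rfl (fun _ _ => by ring)
    have e2 : xf (Zyk.symG G u v) + xf (Zyk.symG G v u) =
        ∑ i, α i * ((niceCopyCount (H i) (completeGraph (Fin (k i + 1))) (Zyk.symG G u v) : ℝ)
            + (niceCopyCount (H i) (completeGraph (Fin (k i + 1))) (Zyk.symG G v u) : ℝ))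
          + ∑ j, β j * ((_root_.copyCount (H' j) (Zyk.symG G u v) : ℝ)
            + (_root_.copyCount (H' j) (Zyk.symG G v u) : ℝ)) := by
      rw [hxf]
      simp only [mul_add, Finset.sum_add_distrib]
      ring
    rw [e1, e2]
    apply add_le_add
    · exact Finset.sum_le_sum (fun i _ => mul_le_mul_of_nonneg_left (step1 i) (hα i))
    · exact Finset.sum_le_sum (fun j _ => mul_le_mul_of_nonneg_left (step2 j) (hβ j))
  -- pick a maximizer of xf, and among those a maximizer of PP
  haveI : Nonempty (SimpleGraph (Fin n)) := ⟨⊥⟩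
  obtain ⟨Gmax, hmax⟩ := Finite.exists_max xf
  set S : Set (SimpleGraph (Fin n)) := {G | ∀ G', xf G' ≤ xf G} with hS
  haveI : Nonempty {G // G ∈ S} := ⟨⟨Gmax, hmax⟩⟩
  obtain ⟨⟨G₀, hG₀S⟩, hG₀PP⟩ := Finite.exists_max (fun G : {G // G ∈ S} => Zyk.PP G.1)
  have hPle : ∀ G, G ∈ S → Zyk.PP G ≤ Zyk.PP G₀ := fun G hG => hG₀PP ⟨G, hG⟩
  have memS : ∀ (G : SimpleGraph (Fin n)), G ∈ S → ∀ u' v', u' ≠ v' → ¬ G.Adj u' v' →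
      Zyk.symG G u' v' ∈ S ∧ Zyk.symG G v' u' ∈ S := by
    intro G hG u' v' h1 h2
    have hs := hsym G u' v' h1 h2
    have e1 : xf (Zyk.symG G u' v') ≤ xf G := hG _
    have e2 : xf (Zyk.symG G v' u') ≤ xf G := hG _
    have q1 : xf G ≤ xf (Zyk.symG G u' v') := by linarith
    have q2 : xf G ≤ xf (Zyk.symG G v' u') := by linarith
    exact ⟨fun G' => (hG G').trans q1, fun G' => (hG G').trans q2⟩
  refine ⟨G₀, ?_, fun G => hG₀S G⟩
  -- show that G₀ is complete multipartite
  by_contra hnc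
  rw [_root_.IsCompleteMultipartite] at hnc
  push_neg at hnc
  obtain ⟨u, v, w, huv, hvw, huw⟩ := hnc
  have hune : u ≠ v := fun h => hvw (h ▸ huw)
  have hwne : w ≠ v := fun h => huv (h ▸ huw)
  have hwu : w ≠ u := (huw.ne).symm
  obtain ⟨m1, m2⟩ := memS G₀ hG₀S u v hune huv
  obtain ⟨m3, m4⟩ := memS G₀ hG₀S w v hwne (fun hc => hvw hc.symm)
  have p1 := Zyk.PP_sym (G := G₀) (u := u) (v := v) huv
  have p2 := Zyk.PP_sym (G := G₀) (u := v) (v := u) (fun hc => huv hc.symm)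
  have p3 := Zyk.PP_sym (G := G₀) (u := w) (v := v) (fun hc => hvw hc.symm)
  have p4 := Zyk.PP_sym (G := G₀) (u := v) (v := w) hvw
  have l1 := hPle _ m1
  have l2 := hPle _ m2
  have l3 := hPle _ m3
  have l4 := hPle _ m4
  have duv : Zyk.dd G₀ u = Zyk.dd G₀ v := by omega
  have dwv : Zyk.dd G₀ w = Zyk.dd G₀ v := by omega
  have hnadj1 : ¬ (Zyk.symG G₀ u v).Adj w v := by
    rw [Zyk.symG_adj_of_ne hwu hune.symm]
    exact fun hc => hvw hc.symm
  obtain ⟨m5, _⟩ := memS (Zyk.symG G₀ u v) m1 w v hwne hnadj1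
  have l5 := hPle _ m5
  have p5 := Zyk.PP_sym (G := Zyk.symG G₀ u v) (u := w) (v := v) hnadj1
  have q1 : Zyk.dd (Zyk.symG G₀ u v) v = Zyk.dd G₀ v := Zyk.dd_sym_v huv hune.symm
  have q2 : Zyk.dd (Zyk.symG G₀ u v) w + 1 = Zyk.dd G₀ w :=
    Zyk.dd_sym_w huv hwu huw.symm hvw
  omega
end

section
/- For every n, ex_re(n,K_3,C_4) = ex_re(n,K_3,B_2) = ex(n,K_3,B_2), where B_2 is the book with two pages. In particular, a triangle in a graph G aligns with a copy of C_4 in G if and only if it aligns with a copy of B_2 in G, and the maximum number of triangles not aligning with any B_2 in an n-vertex graph equals the maximum number of triangles in an n-vertex B_2-free graph. -/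
open SimpleGraph

/-- The book with two pages: two triangles sharing an edge, i.e. `K_4` minus an edge. -/
def bookTwo : SimpleGraph (Fin 4) := (completeGraph (Fin 4)).deleteEdges {s(0, 1)}


section Aux

lemma bookTwo_adj {i j : Fin 4} : bookTwo.Adj i j ↔ i ≠ j ∧ s(i,j) ≠ s(0,1) := by
  simp [bookTwo, deleteEdges_adj, completeGraph_eq_top]

instance : DecidableRel bookTwo.Adj := fun _ _ => decidable_of_iff _ bookTwo_adj.symm

/-- Construct a subgraph from a pattern graph and a vertex map. -/
def mkCopy {V : Type*} (G : SimpleGraph V) {m : ℕ} (H : SimpleGraph (Fin m)) (f : Fin m → V)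
    (hadj : ∀ i j, H.Adj i j → G.Adj (f i) (f j)) : G.Subgraph where
  verts := Set.range f
  Adj x y := ∃ i j, H.Adj i j ∧ f i = x ∧ f j = y
  adj_sub := by rintro x y ⟨i, j, h, rfl, rfl⟩; exact hadj i j h
  edge_vert := by rintro x y ⟨i, j, h, rfl, rfl⟩; exact Set.mem_range_self i
  symm := ⟨by rintro x y ⟨i, j, h, rfl, rfl⟩; exact ⟨j, i, h.symm, rfl, rfl⟩⟩

lemma mkCopy_verts {V : Type*} (G : SimpleGraph V) {m : ℕ} (H : SimpleGraph (Fin m))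
    (f : Fin m → V) (hadj) : (mkCopy G H f hadj).verts = Set.range f := rfl

lemma mkCopy_adj {V : Type*} (G : SimpleGraph V) {m : ℕ} (H : SimpleGraph (Fin m))
    (f : Fin m → V) (hinj : Function.Injective f) (hadj) (i j : Fin m) :
    (mkCopy G H f hadj).Adj (f i) (f j) ↔ H.Adj i j := by
  constructor
  · rintro ⟨i', j', h, hx, hy⟩
    rwa [hinj hx, hinj hy] at h
  · intro h; exact ⟨i, j, h, rfl, rfl⟩

lemma isCopyOf_iff {V : Type*} {G : SimpleGraph V} {m : ℕ} {H : SimpleGraph (Fin m)}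
    {A : G.Subgraph} :
    A.IsCopyOf H ↔ ∃ f : Fin m → V, Function.Injective f ∧ Set.range f = A.verts ∧
      ∀ i j, H.Adj i j ↔ A.Adj (f i) (f j) := by
  constructor
  · rintro ⟨e⟩
    refine ⟨fun i => (e.symm i : V), fun i j hij => ?_, ?_, fun i j => ?_⟩
    · exact e.symm.injective (Subtype.ext hij)
    · ext x
      constructor
      · rintro ⟨i, rfl⟩; exact (e.symm i).2
      · intro hx; exact ⟨e ⟨x, hx⟩, by simp⟩
    · rw [← e.symm.map_adj_iff]; rfl
  · rintro ⟨f, hinj, hrange, hadj⟩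
    let e : Fin m ≃ ↥A.verts := (Equiv.ofInjective f hinj).trans (Equiv.setCongr hrange)
    have he : ∀ i, (e i : V) = f i := fun i => by simp [e]
    refine ⟨⟨e.symm, fun {x y} => ?_⟩⟩
    rw [hadj]
    have hx : f (e.symm x) = (x : V) := by rw [← he, e.apply_symm_apply]
    have hy : f (e.symm y) = (y : V) := by rw [← he, e.apply_symm_apply]
    rw [hx, hy]; rfl

lemma mkCopy_isCopyOf {V : Type*} (G : SimpleGraph V) {m : ℕ} (H : SimpleGraph (Fin m))
    (f : Fin m → V) (hinj : Function.Injective f) (hadj) :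
    (mkCopy G H f hadj).IsCopyOf H := by
  rw [isCopyOf_iff]
  exact ⟨f, hinj, rfl, fun i j => (mkCopy_adj G H f hinj hadj i j).symm⟩

/-- Adjacency in a copy of `K₃`. -/
lemma k3_adj {V : Type*} {G : SimpleGraph V} {A : G.Subgraph}
    (hA : A.IsCopyOf (completeGraph (Fin 3))) {x y : V} :
    A.Adj x y ↔ x ∈ A.verts ∧ y ∈ A.verts ∧ x ≠ y := by
  obtain ⟨f, hinj, hrange, hadj⟩ := isCopyOf_iff.mp hA
  constructor
  · intro h
    exact ⟨A.edge_vert h, A.edge_vert h.symm, (A.adj_sub h).ne⟩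
  · rintro ⟨hx, hy, hne⟩
    rw [← hrange] at hx hy
    obtain ⟨i, rfl⟩ := hx
    obtain ⟨j, rfl⟩ := hy
    have : i ≠ j := fun h => hne (by rw [h])
    exact (hadj i j).mp (by simpa using this)

/-- Two copies of `K₃` with the same vertex set are equal. -/
lemma k3_eq_of_verts_eq {V : Type*} {G : SimpleGraph V} {A B : G.Subgraph}
    (hA : A.IsCopyOf (completeGraph (Fin 3))) (hB : B.IsCopyOf (completeGraph (Fin 3)))
    (h : A.verts = B.verts) : A = B := by
  ext x y
  · rw [h]
  · rw [k3_adj hA, k3_adj hB, h]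

/-- The third vertex of a triangle through an edge. -/
lemma k3_third {V : Type*} {G : SimpleGraph V} {A : G.Subgraph}
    (hA : A.IsCopyOf (completeGraph (Fin 3))) {c d : V} (h : A.Adj c d) :
    ∃ x, x ≠ c ∧ x ≠ d ∧ A.verts = {c, d, x} := by
  obtain ⟨f, hinj, hrange, hadj⟩ := isCopyOf_iff.mp hA
  have hc : c ∈ Set.range f := hrange ▸ A.edge_vert h
  have hd : d ∈ Set.range f := hrange ▸ A.edge_vert h.symm
  obtain ⟨i, rfl⟩ := hc
  obtain ⟨j, rfl⟩ := hd
  have hij : i ≠ j := fun hh => (A.adj_sub h).ne (by rw [hh])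
  obtain ⟨k, hki, hkj, hall⟩ : ∃ k, k ≠ i ∧ k ≠ j ∧ ∀ l : Fin 3, l = i ∨ l = j ∨ l = k := by
    have key : ∀ i j : Fin 3, i ≠ j → ∃ k, k ≠ i ∧ k ≠ j ∧ ∀ l : Fin 3, l = i ∨ l = j ∨ l = k := by
      decide
    exact key i j hij
  refine ⟨f k, fun hh => hki (hinj hh), fun hh => hkj (hinj hh), ?_⟩
  rw [← hrange]
  ext x
  simp only [Set.mem_range, Set.mem_insert_iff, Set.mem_singleton_iff]
  constructor
  · rintro ⟨l, rfl⟩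
    rcases hall l with h | h | h <;> subst h <;> tauto
  · rintro (rfl | rfl | rfl) <;> exact ⟨_, rfl⟩

/-- No injective image of `Fin 4` fits inside an injective image of `Fin 3`. -/
lemma not_range4_subset_range3 {V : Type*} {f : Fin 4 → V} {g : Fin 3 → V}
    (hf : Function.Injective f) (hg : Function.Injective g) :
    ¬ Set.range f ⊆ Set.range g := by
  intro h
  have : ∀ i : Fin 4, ∃ j : Fin 3, g j = f i := fun i => h (Set.mem_range_self i)
  choose F hF using this
  have hFinj : Function.Injective F := fun i j hij => hf (by rw [← hF, ← hF, hij])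
  have := Fintype.card_le_of_injective F hFinj
  simp at this

lemma range4_eq {V : Type*} (a b c d : V) : Set.range ![a,b,c,d] = {a,b,c,d} := by
  ext x
  simp only [Set.mem_range, Set.mem_insert_iff, Set.mem_singleton_iff]
  constructor
  · rintro ⟨i, rfl⟩; fin_cases i <;> simp
  · rintro (rfl | rfl | rfl | rfl)
    exacts [⟨0, rfl⟩, ⟨1, rfl⟩, ⟨2, rfl⟩, ⟨3, rfl⟩]

lemma inj4 {V : Type*} {a b c d : V} (hab : a ≠ b) (hac : a ≠ c) (had : a ≠ d)
    (hbc : b ≠ c) (hbd : b ≠ d) (hcd : c ≠ d) : Function.Injective ![a,b,c,d] := by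
  intro i j h
  fin_cases i <;> fin_cases j <;> simp_all

lemma exists_bookTwo_copy {V : Type*} {G : SimpleGraph V} {a b c d : V}
    (hab : a ≠ b) (hac : a ≠ c) (had : a ≠ d) (hbc : b ≠ c) (hbd : b ≠ d) (hcd : c ≠ d)
    (h02 : G.Adj a c) (h03 : G.Adj a d) (h12 : G.Adj b c) (h13 : G.Adj b d)
    (h23 : G.Adj c d) :
    ∃ B : G.Subgraph, B.IsCopyOf bookTwo ∧ B.verts = {a, b, c, d} := by
  have hadj : ∀ i j, bookTwo.Adj i j → G.Adj (![a,b,c,d] i) (![a,b,c,d] j) := by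
    intro i j hb
    fin_cases i <;> fin_cases j <;>
      first
        | exact absurd hb (by decide)
        | exact h02 | exact h02.symm | exact h03 | exact h03.symm
        | exact h12 | exact h12.symm | exact h13 | exact h13.symm
        | exact h23 | exact h23.symm
  exact ⟨mkCopy G bookTwo ![a,b,c,d] hadj,
    mkCopy_isCopyOf G bookTwo _ (inj4 hab hac had hbc hbd hcd) hadj,
    (mkCopy_verts _ _ _ _).trans (range4_eq a b c d)⟩

lemma exists_c4_copy {V : Type*} {G : SimpleGraph V} {a b c d : V}
    (hab : a ≠ b) (hac : a ≠ c) (had : a ≠ d) (hbc : b ≠ c) (hbd : b ≠ d) (hcd : c ≠ d)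
    (h01 : G.Adj a b) (h12 : G.Adj b c) (h23 : G.Adj c d) (h30 : G.Adj d a) :
    ∃ B : G.Subgraph, B.IsCopyOf (cycleGraph 4) ∧ B.verts = {a, b, c, d} := by
  have hadj : ∀ i j, (cycleGraph 4).Adj i j → G.Adj (![a,b,c,d] i) (![a,b,c,d] j) := by
    intro i j hb
    fin_cases i <;> fin_cases j <;>
      first
        | exact absurd hb (by decide)
        | exact h01 | exact h01.symm | exact h12 | exact h12.symm
        | exact h23 | exact h23.symm | exact h30 | exact h30.symm
  exact ⟨mkCopy G (cycleGraph 4) ![a,b,c,d] hadj,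
    mkCopy_isCopyOf G (cycleGraph 4) _ (inj4 hab hac had hbc hbd hcd) hadj,
    (mkCopy_verts _ _ _ _).trans (range4_eq a b c d)⟩

/-- A triangle aligning with a 4-vertex copy has its vertices inside it. -/
lemma aligns_subset {V : Type*} {G : SimpleGraph V} {A B : G.Subgraph}
    {H : SimpleGraph (Fin 4)} (hA : A.IsCopyOf (completeGraph (Fin 3)))
    (hB : B.IsCopyOf H) (hal : A.Aligns B) : A.verts ⊆ B.verts := by
  rcases hal with h | h
  · exact h
  · exfalso
    obtain ⟨f, hfinj, hfr, -⟩ := isCopyOf_iff.mp hB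
    obtain ⟨g, hginj, hgr, -⟩ := isCopyOf_iff.mp hA
    exact not_range4_subset_range3 hfinj hginj (by rw [hfr, hgr]; exact h)

lemma align_iff {V : Type*} (G : SimpleGraph V) (A : G.Subgraph)
    (hA : A.IsCopyOf (completeGraph (Fin 3))) :
    (∃ B : G.Subgraph, B.IsCopyOf (cycleGraph 4) ∧ A.Aligns B) ↔
      (∃ B : G.Subgraph, B.IsCopyOf bookTwo ∧ A.Aligns B) := by
  obtain ⟨g, hginj, hgr, hgadj⟩ := isCopyOf_iff.mp hA
  constructor
  · rintro ⟨B, hB, hal⟩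
    have hsub : A.verts ⊆ B.verts := aligns_subset hA hB hal
    obtain ⟨f, hfinj, hfr, hfadj⟩ := isCopyOf_iff.mp hB
    have ne' : ∀ i j : Fin 4, i ≠ j → f i ≠ f j := fun i j h hh => h (hfinj hh)
    have h01 : G.Adj (f 0) (f 1) := B.adj_sub ((hfadj 0 1).mp (by decide))
    have h12 : G.Adj (f 1) (f 2) := B.adj_sub ((hfadj 1 2).mp (by decide))
    have h23 : G.Adj (f 2) (f 3) := B.adj_sub ((hfadj 2 3).mp (by decide))
    have h30 : G.Adj (f 3) (f 0) := B.adj_sub ((hfadj 3 0).mp (by decide))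
    have hmem : ∀ k : Fin 3, ∃ i, f i = g k := by
      intro k
      have : g k ∈ B.verts := hsub (hgr ▸ Set.mem_range_self k)
      rwa [← hfr] at this
    choose ι hι using hmem
    have hιinj : Function.Injective ι := fun k l h => hginj (by rw [← hι, ← hι, h])
    have key : ∀ ι : Fin 3 → Fin 4, Function.Injective ι →
        (∃ k l : Fin 3, ι k = 0 ∧ ι l = 2) ∨ (∃ k l : Fin 3, ι k = 1 ∧ ι l = 3) := by
      decide
    have hdiag : ∀ (i j : Fin 4) (k l : Fin 3), ι k = i → ι l = j → i ≠ j →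
        G.Adj (f i) (f j) := by
      intro i j k l hk hl hij
      have hkl : k ≠ l := fun h => hij (by rw [← hk, ← hl, h])
      have : A.Adj (g k) (g l) := (hgadj k l).mp (by simpa using hkl)
      have := A.adj_sub this
      rwa [← hι, ← hι, hk, hl] at this
    have hBsub : A.verts ⊆ Set.range f := by rw [hfr]; exact hsub
    rcases key ι hιinj with ⟨k, l, hk, hl⟩ | ⟨k, l, hk, hl⟩
    · have hd : G.Adj (f 0) (f 2) := hdiag 0 2 k l hk hl (by decide)
      obtain ⟨B', hB', hBv⟩ := exists_bookTwo_copy (ne' 1 3 (by decide)) (ne' 1 0 (by decide))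
        (ne' 1 2 (by decide)) (ne' 3 0 (by decide)) (ne' 3 2 (by decide)) (ne' 0 2 (by decide))
        h01.symm h12 h30 h23.symm hd
      refine ⟨B', hB', Or.inl ?_⟩
      rw [hBv]
      intro x hx
      obtain ⟨i, rfl⟩ := hBsub hx
      fin_cases i <;> simp
    · have hd : G.Adj (f 1) (f 3) := hdiag 1 3 k l hk hl (by decide)
      obtain ⟨B', hB', hBv⟩ := exists_bookTwo_copy (ne' 0 2 (by decide)) (ne' 0 1 (by decide))
        (ne' 0 3 (by decide)) (ne' 2 1 (by decide)) (ne' 2 3 (by decide)) (ne' 1 3 (by decide))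
        h01 h30.symm h12.symm h23 hd
      refine ⟨B', hB', Or.inl ?_⟩
      rw [hBv]
      intro x hx
      obtain ⟨i, rfl⟩ := hBsub hx
      fin_cases i <;> simp
  · rintro ⟨B, hB, hal⟩
    have hsub : A.verts ⊆ B.verts := aligns_subset hA hB hal
    obtain ⟨f, hfinj, hfr, hfadj⟩ := isCopyOf_iff.mp hB
    have ne' : ∀ i j : Fin 4, i ≠ j → f i ≠ f j := fun i j h hh => h (hfinj hh)
    have badj : ∀ i j : Fin 4, bookTwo.Adj i j → G.Adj (f i) (f j) := fun i j h =>
      B.adj_sub ((hfadj i j).mp h)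
    have h02 : G.Adj (f 0) (f 2) := badj 0 2 (bookTwo_adj.mpr (by decide))
    have h03 : G.Adj (f 0) (f 3) := badj 0 3 (bookTwo_adj.mpr (by decide))
    have h12 : G.Adj (f 1) (f 2) := badj 1 2 (bookTwo_adj.mpr (by decide))
    have h13 : G.Adj (f 1) (f 3) := badj 1 3 (bookTwo_adj.mpr (by decide))
    obtain ⟨B', hB', hBv⟩ := exists_c4_copy (ne' 0 2 (by decide)) (ne' 0 1 (by decide))
      (ne' 0 3 (by decide)) (ne' 2 1 (by decide)) (ne' 2 3 (by decide)) (ne' 1 3 (by decide))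
      h02 h12.symm h13 h03.symm
    refine ⟨B', hB', Or.inl ?_⟩
    rw [hBv]
    intro x hx
    have : x ∈ Set.range f := by rw [hfr]; exact hsub hx
    obtain ⟨i, rfl⟩ := this
    fin_cases i <;> simp

/-- The union of all nice triangles of `G`. -/
def niceUnion {V : Type*} (G : SimpleGraph V) : SimpleGraph V where
  Adj x y := ∃ T : G.Subgraph, T.IsCopyOf (completeGraph (Fin 3)) ∧ T.Nice bookTwo ∧ T.Adj x y
  symm := ⟨by rintro x y ⟨T, h1, h2, h3⟩; exact ⟨T, h1, h2, h3.symm⟩⟩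
  loopless := ⟨by rintro x ⟨T, h1, h2, h3⟩; exact (T.adj_sub h3).ne rfl⟩

lemma niceUnion_le {V : Type*} (G : SimpleGraph V) : niceUnion G ≤ G := by
  rintro x y ⟨T, _, _, h3⟩; exact T.adj_sub h3

/-- If `T` is a nice triangle of `G` through edge `cd`, any common `G`-neighbor of `c` and
`d` lies in `T`. -/
lemma mem_of_nice {V : Type*} {G : SimpleGraph V} {T : G.Subgraph}
    (hT : T.IsCopyOf (completeGraph (Fin 3))) (hN : T.Nice bookTwo) {a c d : V}
    (hcd : T.Adj c d) (hac : G.Adj a c) (had : G.Adj a d) : a ∈ T.verts := by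
  by_contra hmem
  obtain ⟨x, hxc, hxd, hverts⟩ := k3_third hT hcd
  have hxT : x ∈ T.verts := by rw [hverts]; right; right; rfl
  have hcT : c ∈ T.verts := T.edge_vert hcd
  have hdT : d ∈ T.verts := T.edge_vert hcd.symm
  have hax : a ≠ x := fun h => hmem (h ▸ hxT)
  have hGxc : G.Adj x c := T.adj_sub ((k3_adj hT).mpr ⟨hxT, hcT, hxc⟩)
  have hGxd : G.Adj x d := T.adj_sub ((k3_adj hT).mpr ⟨hxT, hdT, hxd⟩)
  obtain ⟨B, hB, hBv⟩ := exists_bookTwo_copy hax hac.ne had.ne hxc hxd (T.adj_sub hcd).ne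
    hac had hGxc hGxd (T.adj_sub hcd)
  refine hN B hB (Or.inl ?_)
  rw [hBv, hverts]
  intro y hy
  rcases hy with rfl | rfl | rfl
  · right; right; left; rfl
  · right; right; right; rfl
  · right; left; rfl

/-- `niceUnion G` contains no copy of `bookTwo`. -/
lemma niceUnion_free {V : Type*} (G : SimpleGraph V) : FreeOf bookTwo (niceUnion G) := by
  rintro ⟨A, hA⟩
  obtain ⟨f, hfinj, hfr, hfadj⟩ := isCopyOf_iff.mp hA
  have badj : ∀ i j : Fin 4, bookTwo.Adj i j → (niceUnion G).Adj (f i) (f j) := fun i j h =>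
    A.adj_sub ((hfadj i j).mp h)
  have hb : bookTwo.Adj 2 3 := by
    simp [bookTwo, deleteEdges_adj, completeGraph_eq_top]
  obtain ⟨T, hT, hN, hTadj⟩ := badj 2 3 hb
  have h0 : f 0 ∈ T.verts := by
    refine mem_of_nice hT hN hTadj ?_ ?_
    · exact niceUnion_le G (badj 0 2 (by simp [bookTwo, deleteEdges_adj, completeGraph_eq_top]))
    · exact niceUnion_le G (badj 0 3 (by simp [bookTwo, deleteEdges_adj, completeGraph_eq_top]))
  have h1 : f 1 ∈ T.verts := by
    refine mem_of_nice hT hN hTadj ?_ ?_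
    · exact niceUnion_le G (badj 1 2 (by simp [bookTwo, deleteEdges_adj, completeGraph_eq_top]))
    · exact niceUnion_le G (badj 1 3 (by simp [bookTwo, deleteEdges_adj, completeGraph_eq_top]))
  obtain ⟨x, hxc, hxd, hverts⟩ := k3_third hT hTadj
  have ne' : ∀ i j : Fin 4, i ≠ j → f i ≠ f j := fun i j h hh => h (hfinj hh)
  rw [hverts] at h0 h1
  rcases h0 with h0 | h0 | h0
  · exact ne' 0 2 (by decide) h0
  · exact ne' 0 3 (by decide) h0
  · rcases h1 with h1 | h1 | h1
    · exact ne' 1 2 (by decide) h1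
    · exact ne' 1 3 (by decide) h1
    · exact ne' 0 1 (by decide) (h0.trans h1.symm)

/-- Copies of `K₃` in `niceUnion G` correspond to nice triangles of `G`. -/
lemma niceUnion_count {V : Type*} (G : SimpleGraph V) :
    _root_.copyCount (completeGraph (Fin 3)) (niceUnion G) =
      niceCopyCount (completeGraph (Fin 3)) bookTwo G := by
  apply Nat.card_congr
  apply Equiv.symm
  refine ⟨fun A => ⟨⟨A.1.verts, A.1.Adj, fun h => ⟨A.1, A.2.1, A.2.2, h⟩,
      A.1.edge_vert, A.1.symm⟩, ?_⟩,
    fun A' => ⟨⟨A'.1.verts, A'.1.Adj, fun h => niceUnion_le G (A'.1.adj_sub h),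
      A'.1.edge_vert, A'.1.symm⟩, ?_, ?_⟩, fun A => ?_, fun A' => ?_⟩
  · obtain ⟨f, h1, h2, h3⟩ := isCopyOf_iff.mp A.2.1
    exact isCopyOf_iff.mpr ⟨f, h1, h2, h3⟩
  · obtain ⟨f, h1, h2, h3⟩ := isCopyOf_iff.mp A'.2
    exact isCopyOf_iff.mpr ⟨f, h1, h2, h3⟩
  · -- niceness of the downstairs triangle
    set A : G.Subgraph := ⟨A'.1.verts, A'.1.Adj, fun h => niceUnion_le G (A'.1.adj_sub h),
      A'.1.edge_vert, A'.1.symm⟩ with hAdef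
    have hAcopy : A.IsCopyOf (completeGraph (Fin 3)) := by
      obtain ⟨f, h1, h2, h3⟩ := isCopyOf_iff.mp A'.2
      exact isCopyOf_iff.mpr ⟨f, h1, h2, h3⟩
    obtain ⟨f, hfinj, hfr, hfadj⟩ := isCopyOf_iff.mp A'.2
    have h01' : A'.1.Adj (f 0) (f 1) := (hfadj 0 1).mp (by simp [completeGraph_eq_top])
    obtain ⟨T, hT, hN, hTadj⟩ : (niceUnion G).Adj (f 0) (f 1) := A'.1.adj_sub h01'
    have h02 : G.Adj (f 2) (f 0) :=
      niceUnion_le G (A'.1.adj_sub ((hfadj 2 0).mp (by simp [completeGraph_eq_top])))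
    have h12 : G.Adj (f 2) (f 1) :=
      niceUnion_le G (A'.1.adj_sub ((hfadj 2 1).mp (by simp [completeGraph_eq_top])))
    have h2T : f 2 ∈ T.verts := mem_of_nice hT hN hTadj h02 h12
    have hTverts : T.verts = A.verts := by
      obtain ⟨x, hx0, hx1, hverts⟩ := k3_third hT hTadj
      have hx2 : x = f 2 := by
        rw [hverts] at h2T
        rcases h2T with h | h | h
        · exact absurd (hfinj h) (by decide)
        · exact absurd (hfinj h) (by decide)
        · exact h.symm
      have : A.verts = {f 0, f 1, f 2} := by
        show A'.1.verts = _
        rw [← hfr]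
        ext y
        simp only [Set.mem_range, Set.mem_insert_iff, Set.mem_singleton_iff]
        constructor
        · rintro ⟨i, rfl⟩
          fin_cases i <;> simp
        · rintro (rfl | rfl | rfl)
          exacts [⟨0, rfl⟩, ⟨1, rfl⟩, ⟨2, rfl⟩]
      rw [hverts, hx2, this]
    have : T = A := k3_eq_of_verts_eq hT hAcopy hTverts
    rw [← this]
    exact hN
  · ext <;> rfl
  · ext <;> rfl

/-- `B₂`-niceness and `C₄`-niceness agree for triangles. -/
lemma nice_iff {V : Type*} {G : SimpleGraph V} {A : G.Subgraph}
    (hA : A.IsCopyOf (completeGraph (Fin 3))) :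
    A.Nice (cycleGraph 4) ↔ A.Nice bookTwo := by
  constructor
  · intro h B hB hal
    obtain ⟨B', h1, h2⟩ := (align_iff G A hA).mpr ⟨B, hB, hal⟩
    exact h B' h1 h2
  · intro h B hB hal
    obtain ⟨B', h1, h2⟩ := (align_iff G A hA).mp ⟨B, hB, hal⟩
    exact h B' h1 h2

lemma niceCount_eq {V : Type*} (G : SimpleGraph V) :
    niceCopyCount (completeGraph (Fin 3)) (cycleGraph 4) G =
      niceCopyCount (completeGraph (Fin 3)) bookTwo G := by
  apply Nat.card_congr
  exact Equiv.subtypeEquivRight fun A => and_congr_right fun hA => nice_iff hA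

lemma free_count_eq {V : Type*} {G : SimpleGraph V} (h : FreeOf bookTwo G) :
    _root_.copyCount (completeGraph (Fin 3)) G =
      niceCopyCount (completeGraph (Fin 3)) bookTwo G := by
  apply Nat.card_congr
  exact Equiv.subtypeEquivRight fun A =>
    (and_iff_left (fun B hB _ => h ⟨B, hB⟩)).symm

end Aux

/-- `ex_re(n,K_3,C_4) = ex_re(n,K_3,B_2) = ex(n,K_3,B_2)`; moreover, a triangle aligns with
a copy of `C_4` iff it aligns with a copy of `B_2`. -/
theorem exRe_triangle_C4_eq_book :
    (∀ n : ℕ,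
      exRe n (completeGraph (Fin 3)) (cycleGraph 4) = exRe n (completeGraph (Fin 3)) bookTwo ∧
      exRe n (completeGraph (Fin 3)) bookTwo = exGen n (completeGraph (Fin 3)) bookTwo) ∧
    (∀ (V : Type*) (G : SimpleGraph V) (A : G.Subgraph),
      A.IsCopyOf (completeGraph (Fin 3)) →
        ((∃ B : G.Subgraph, B.IsCopyOf (cycleGraph 4) ∧ A.Aligns B) ↔
          (∃ B : G.Subgraph, B.IsCopyOf bookTwo ∧ A.Aligns B))) := by
  constructor
  · intro n
    constructor
    · unfold exRe
      congr 1
      ext N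
      simp only [Set.mem_setOf_eq]
      constructor
      · rintro ⟨G, rfl⟩; exact ⟨G, niceCount_eq G⟩
      · rintro ⟨G, rfl⟩; exact ⟨G, (niceCount_eq G).symm⟩
    · unfold exRe exGen
      congr 1
      ext N
      simp only [Set.mem_setOf_eq]
      constructor
      · rintro ⟨G, rfl⟩
        exact ⟨niceUnion G, niceUnion_free G, (niceUnion_count G).symm⟩
      · rintro ⟨G, hfree, rfl⟩
        exact ⟨G, free_count_eq hfree⟩
  · intro V G A hA
    exact align_iff G A hA
end

section
/- Let ℓ ≥ 4 be an integer and G an arbitrary graph. Then the number of triangles in G that do not align with any copy of C_ℓ in G is at most (ℓ−3)·|E(G)|/3. Moreover, for every vertex v of G, the number of such triangles containing v is at most (ℓ−3)·d(v)/2, where d(v) is the degree of v. -/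
open SimpleGraph

set_option linter.unusedSectionVars false
set_option maxHeartbeats 1000000

open List Finset

namespace EGaux


variable {V : Type*} [DecidableEq V] (H : SimpleGraph V) [DecidableRel H.Adj]

def degIn (s : Finset V) (x : V) : ℕ := (s.filter (H.Adj x)).card

def pairsIn (s : Finset V) : ℕ := ∑ x ∈ s, degIn H s x

def IsPathIn (s : Finset V) (xs : List V) : Prop :=
  xs.IsChain H.Adj ∧ xs.Nodup ∧ ∀ x ∈ xs, x ∈ s

def IsCycleIn (s : Finset V) (xs : List V) : Prop :=
  xs.IsChain H.Adj ∧ (∀ a ∈ xs.head?, ∀ b ∈ xs.getLast?, H.Adj b a)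
    ∧ xs.Nodup ∧ ∀ x ∈ xs, x ∈ s

def ReachIn (s : Finset V) : V → V → Prop :=
  Relation.ReflTransGen (fun x y => H.Adj x y ∧ x ∈ s ∧ y ∈ s)

variable {H}

lemma IsPathIn.length_le {s : Finset V} {xs : List V} (h : IsPathIn H s xs) :
    xs.length ≤ s.card := by
  have h1 : xs.toFinset ⊆ s := fun x hx => h.2.2 x (List.mem_toFinset.mp hx)
  calc xs.length = xs.toFinset.card := (List.toFinset_card_of_nodup h.2.1).symm
    _ ≤ s.card := Finset.card_le_card h1

lemma pairs_erase {s : Finset V} {v : V} (hv : v ∈ s) :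
    pairsIn H s = pairsIn H (s.erase v) + 2 * degIn H s v := by
  have hvnot : v ∉ s.erase v := Finset.notMem_erase v s
  have hsv : s = insert v (s.erase v) := (Finset.insert_erase hv).symm
  have hdeg : ∀ x, degIn H s x = degIn H (s.erase v) x + if H.Adj x v then 1 else 0 := by
    intro x
    rw [degIn, degIn]
    conv_lhs => rw [hsv]
    rw [Finset.filter_insert]
    split
    · rw [Finset.card_insert_of_notMem (fun hmem => hvnot (Finset.mem_of_mem_filter _ hmem))]
    · simp
  have hdegv : degIn H (s.erase v) v = degIn H s v := by
    rw [degIn, degIn, Finset.filter_erase, Finset.erase_eq_of_notMem]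
    intro hmem
    exact H.irrefl (Finset.mem_filter.mp hmem).2
  have hsum : ∑ x ∈ s.erase v, (if H.Adj x v then 1 else 0) = degIn H (s.erase v) v := by
    rw [degIn, Finset.card_filter]
    exact (Finset.sum_congr rfl (fun x _ => by simp [H.adj_comm x v])).symm
  calc pairsIn H s = ∑ x ∈ insert v (s.erase v), degIn H s x := by rw [pairsIn, ← hsv]
    _ = degIn H s v + ∑ x ∈ s.erase v, degIn H s x := Finset.sum_insert hvnot
    _ = degIn H s v + ∑ x ∈ s.erase v, (degIn H (s.erase v) x + if H.Adj x v then 1 else 0) := by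
        rw [Finset.sum_congr rfl (fun x _ => hdeg x)]
    _ = degIn H s v + (pairsIn H (s.erase v) + degIn H (s.erase v) v) := by
        rw [Finset.sum_add_distrib, hsum]; rfl
    _ = pairsIn H (s.erase v) + 2 * degIn H s v := by rw [hdegv]; ring

lemma pairs_union {A B : Finset V} (hd : Disjoint A B)
    (hAB : ∀ x ∈ A, ∀ y ∈ B, ¬H.Adj x y) :
    pairsIn H (A ∪ B) = pairsIn H A + pairsIn H B := by
  have hBA : ∀ x ∈ B, ∀ y ∈ A, ¬H.Adj x y := fun x hx y hy h => hAB y hy x hx h.symm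
  have hdeg : ∀ x, degIn H (A ∪ B) x = degIn H A x + degIn H B x := by
    intro x
    rw [degIn, degIn, degIn, Finset.filter_union,
      Finset.card_union_of_disjoint (hd.mono (Finset.filter_subset _ _) (Finset.filter_subset _ _))]
  have hdA : ∀ x ∈ A, degIn H B x = 0 := by
    intro x hx
    rw [degIn, Finset.card_eq_zero, Finset.filter_eq_empty_iff]
    exact fun {y} hy => hAB x hx y hy
  have hdB : ∀ x ∈ B, degIn H A x = 0 := by
    intro x hx
    rw [degIn, Finset.card_eq_zero, Finset.filter_eq_empty_iff]
    exact fun {y} hy => hBA x hx y hy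
  rw [pairsIn, Finset.sum_union hd, pairsIn, pairsIn]
  congr 1
  · exact Finset.sum_congr rfl fun x hx => by rw [hdeg, hdA x hx, add_zero]
  · exact Finset.sum_congr rfl fun x hx => by rw [hdeg, hdB x hx, zero_add]

lemma pairs_le_trivial (s : Finset V) : pairsIn H s ≤ s.card * (s.card - 1) := by
  have h : ∀ x ∈ s, degIn H s x ≤ s.card - 1 := by
    intro x hx
    have hsub : s.filter (H.Adj x) ⊆ s.erase x := by
      intro y hy
      rw [Finset.mem_erase]
      obtain ⟨hys, hadj⟩ := Finset.mem_filter.mp hy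
      exact ⟨(H.ne_of_adj hadj).symm, hys⟩
    calc degIn H s x ≤ (s.erase x).card := Finset.card_le_card hsub
      _ = s.card - 1 := Finset.card_erase_of_mem hx
  calc pairsIn H s ≤ ∑ _x ∈ s, (s.card - 1) := Finset.sum_le_sum h
    _ = s.card * (s.card - 1) := by rw [Finset.sum_const, smul_eq_mul]

lemma IsCycleIn.rotate_one {s : Finset V} {xs : List V} (h : IsCycleIn H s xs) :
    IsCycleIn H s (xs.rotate 1) := by
  match xs with
  | [] => simpa using h
  | [x] => simpa using h
  | x :: y :: t =>
    have hr : ((x :: y :: t).rotate 1) = (y :: t) ++ [x] := by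
      rw [List.rotate_cons_succ, List.rotate_zero]
    obtain ⟨hch, hcl, hnd, hm⟩ := h
    have hxy : H.Adj x y ∧ (y :: t).IsChain H.Adj := List.isChain_cons_cons.mp hch
    rw [hr]
    refine ⟨?_, ?_, ?_, ?_⟩
    · rw [List.isChain_append]
      refine ⟨hxy.2, List.isChain_singleton x, ?_⟩
      intro p hp q hq
      simp only [List.head?_cons, Option.mem_def, Option.some.injEq] at hq
      subst hq
      have hgl := List.getLast?_eq_getLast (l := y :: t) (by simp)
      rw [hgl] at hp
      simp only [Option.mem_def, Option.some.injEq] at hp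
      subst hp
      exact hcl x (by simp) ((y :: t).getLast (by simp))
        (by rw [List.getLast?_cons_cons, hgl]; rfl)
    · intro p hp q hq
      rw [List.getLast?_concat] at hq
      simp only [Option.mem_def, Option.some.injEq] at hq
      subst hq
      have hhd : ((y :: t) ++ [x]).head? = some y := by simp
      rw [hhd] at hp
      simp only [Option.mem_def, Option.some.injEq] at hp
      subst hp
      exact hxy.1
    · rw [← hr]
      exact List.nodup_rotate.mpr hnd
    · intro z hz
      rw [← hr] at hz
      exact hm z (List.mem_rotate.mp hz)

lemma IsCycleIn.rotate {s : Finset V} {xs : List V} (h : IsCycleIn H s xs) (n : ℕ) :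
    IsCycleIn H s (xs.rotate n) := by
  induction n with
  | zero => simpa using h
  | succ n ih =>
    have hrr : xs.rotate (n + 1) = (xs.rotate n).rotate 1 := by rw [List.rotate_rotate]
    rw [hrr]
    exact ih.rotate_one

lemma cycle_extend {s : Finset V} {ys : List V} {u w : V} (h : IsCycleIn H s ys)
    (hu : u ∈ ys) (huw : H.Adj u w) (hws : w ∈ s) (hwys : w ∉ ys) :
    ∃ zs : List V, IsPathIn H s zs ∧ zs.length = ys.length + 1 := by
  have hlen : 0 < ys.length := List.length_pos_iff.mpr (List.ne_nil_of_mem hu)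
  have hjlt : ys.idxOf u < ys.length := List.idxOf_lt_length_iff.mpr hu
  set j := ys.idxOf u with hj
  have hyju : ys[j]'hjlt = u := List.getElem_idxOf hjlt
  set zs0 := ys.rotate (j + 1) with hzs0
  have hcyc := h.rotate (j + 1)
  have hlen0 : zs0.length = ys.length := List.length_rotate ys (j + 1)
  have hlast : zs0.getLast? = some u := by
    rw [List.getLast?_eq_getElem?, List.getElem?_eq_getElem (by omega : zs0.length - 1 < zs0.length)]
    congr 1
    have hg := List.getElem_rotate ys (j + 1) (zs0.length - 1)
      (by rw [List.length_rotate]; omega)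
    have hidx : (zs0.length - 1 + (j + 1)) % ys.length = j := by
      have h3 : zs0.length - 1 + (j + 1) = j + ys.length := by omega
      rw [h3, Nat.add_mod_right]
      exact Nat.mod_eq_of_lt hjlt
    refine Eq.trans ?_ hyju
    rw [show zs0[zs0.length - 1] = (ys.rotate (j+1))[zs0.length - 1]'(by rw [List.length_rotate]; omega) from rfl]
    rw [hg]
    congr 1
  refine ⟨zs0 ++ [w], ⟨?_, ?_, ?_⟩, ?_⟩
  · rw [List.isChain_append]
    refine ⟨hcyc.1, List.isChain_singleton w, ?_⟩
    intro p hp q hq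
    simp only [List.head?_cons, Option.mem_def, Option.some.injEq] at hq
    subst hq
    rw [hlast] at hp
    simp only [Option.mem_def, Option.some.injEq] at hp
    subst hp
    exact huw
  · rw [List.nodup_append]
    refine ⟨hcyc.2.2.1, List.nodup_singleton w, ?_⟩
    intro a ha b hb hab
    simp only [List.mem_singleton] at hb
    subst hb; subst hab
    exact hwys (List.mem_rotate.mp ha)
  · intro x hx
    rcases List.mem_append.mp hx with hx | hx
    · exact hcyc.2.2.2 x hx
    · simp only [List.mem_singleton] at hx; subst hx; exact hws
  · simp [hlen0]

lemma reach_boundary {s : Finset V} {ys : List V} {a : V} (ha : a ∈ ys) :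
    ∀ {w : V}, ReachIn H s a w → w ∉ ys →
      ∃ u x, u ∈ ys ∧ x ∈ s ∧ x ∉ ys ∧ H.Adj u x := by
  intro w hreach
  induction hreach with
  | refl => exact fun hw => absurd ha hw
  | @tail b c hr step ih =>
    intro hc
    by_cases hb : b ∈ ys
    · exact ⟨b, c, hb, step.2.2, hc, step.1⟩
    · exact ih hb

theorem EG (k : ℕ) (s : Finset V) :
    (∀ xs : List V, IsPathIn H s xs → xs.length ≤ k - 1) →
      pairsIn H s ≤ (k - 2) * s.card := by
  induction s using Finset.strongInduction with
  | _ s ih =>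
  intro hfree
  classical
  rcases Finset.eq_empty_or_nonempty s with rfl | ⟨v0, hv0⟩
  · simp [pairsIn]
  by_cases hsmall : ∃ v ∈ s, 2 * degIn H s v ≤ k - 2
  · obtain ⟨v, hvs, hdeg⟩ := hsmall
    have h1 := pairs_erase (H := H) hvs
    have h2 : pairsIn H (s.erase v) ≤ (k - 2) * (s.erase v).card := by
      apply ih _ (Finset.erase_ssubset hvs)
      intro xs hxs
      exact hfree xs ⟨hxs.1, hxs.2.1, fun x hx => Finset.mem_of_mem_erase (hxs.2.2 x hx)⟩
    rw [Finset.card_erase_of_mem hvs] at h2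
    have hc : 1 ≤ s.card := Finset.card_pos.mpr ⟨v0, hv0⟩
    have he : (k - 2) * (s.card - 1) + (k - 2) = (k - 2) * s.card := by
      have h3 : (k - 2) * (s.card - 1) + (k - 2) = (k - 2) * (s.card - 1 + 1) := by ring
      rw [h3, Nat.sub_add_cancel hc]
    omega
  · push_neg at hsmall
    have hmindeg : ∀ v ∈ s, k - 1 ≤ 2 * degIn H s v := fun v hv => by
      have := hsmall v hv; omega
    set C := s.filter (fun x => ReachIn H s v0 x) with hCdef
    have hCsub : C ⊆ s := Finset.filter_subset _ _
    have hv0C : v0 ∈ C := Finset.mem_filter.mpr ⟨hv0, Relation.ReflTransGen.refl⟩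
    have hclosed : ∀ x ∈ C, ∀ y ∈ s, H.Adj x y → y ∈ C := by
      intro x hx y hy hadj
      obtain ⟨hxs, hreach⟩ := Finset.mem_filter.mp hx
      exact Finset.mem_filter.mpr ⟨hy, hreach.tail ⟨hadj, hxs, hy⟩⟩
    by_cases hCeq : C = s
    · by_cases hbig : s.card ≤ k - 1
      · calc pairsIn H s ≤ s.card * (s.card - 1) := pairs_le_trivial s
          _ ≤ s.card * (k - 2) := Nat.mul_le_mul_left _ (by omega)
          _ = (k - 2) * s.card := Nat.mul_comm _ _
      · exfalso
        have hcard : k - 1 < s.card := by omega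
        have hscard : 1 ≤ s.card := Finset.card_pos.mpr ⟨v0, hv0⟩
        classical
        set P : ℕ → Prop := fun n => ∃ xs : List V, IsPathIn H s xs ∧ xs.length = n with hP
        have hP1 : P 1 :=
          ⟨[v0], ⟨List.isChain_singleton v0, List.nodup_singleton v0, by simpa using hv0⟩, rfl⟩
        set t1 := Nat.findGreatest P s.card with ht1
        have hPt1 : P t1 := Nat.findGreatest_spec hscard hP1
        obtain ⟨xs, hxs, hlenxs⟩ := hPt1
        have hmax : ∀ ys : List V, IsPathIn H s ys → ys.length ≤ t1 := by
          intro ys hys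
          by_contra hcon
          push_neg at hcon
          exact Nat.findGreatest_is_greatest hcon hys.length_le ⟨ys, hys, rfl⟩
        have ht1pos : 1 ≤ t1 := Nat.le_findGreatest hscard hP1
        have ht1k : t1 ≤ k - 1 := by
          have := hfree xs hxs
          omega
        have ht1card : t1 < s.card := by omega
        have hxsne : xs ≠ [] := by
          intro h; rw [h] at hlenxs; simp at hlenxs; omega
        set a := xs.head hxsne with ha
        set b := xs.getLast hxsne with hb
        have has : a ∈ s := hxs.2.2 a (List.head_mem hxsne)
        have hbs : b ∈ s := hxs.2.2 b (List.getLast_mem hxsne)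
        have hxs0 : xs[0]'(by omega) = a := (List.head_eq_getElem hxsne).symm
        have hxslast : xs[xs.length - 1]'(by omega) = b := (List.getLast_eq_getElem hxsne).symm
        have habsorb : ∀ zs : List V, IsPathIn H s zs → zs.length = t1 →
            ∀ y ∈ s, (∀ w ∈ zs.head?, H.Adj w y) → y ∈ zs := by
          intro zs hzs hlz y hys hadj
          by_contra hy
          have hpath : IsPathIn H s (y :: zs) := by
            refine ⟨?_, ?_, ?_⟩
            · rw [List.isChain_cons]
              exact ⟨fun w hw => (hadj w hw).symm, hzs.1⟩
            · exact List.nodup_cons.mpr ⟨hy, hzs.2.1⟩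
            · intro x hx
              rcases List.mem_cons.mp hx with rfl | hx
              · exact hys
              · exact hzs.2.2 x hx
          have := hmax _ hpath
          simp only [List.length_cons, hlz] at this
          omega
        have hnbra : ∀ y ∈ s, H.Adj a y → y ∈ xs := by
          intro y hy hadj
          refine habsorb xs hxs hlenxs y hy ?_
          intro w hw
          rw [List.head?_eq_head hxsne] at hw
          simp only [Option.mem_def, Option.some.injEq] at hw
          subst hw
          exact hadj
        have hrevpath : IsPathIn H s xs.reverse := by
          refine ⟨?_, List.nodup_reverse.mpr hxs.2.1, ?_⟩
          · rw [List.isChain_reverse]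
            exact hxs.1.imp fun u v h => h.symm
          · intro x hx
            exact hxs.2.2 x (List.mem_reverse.mp hx)
        have hnbrb : ∀ y ∈ s, H.Adj b y → y ∈ xs := by
          intro y hy hadj
          have hmem : y ∈ xs.reverse := by
            refine habsorb xs.reverse hrevpath (by simp [hlenxs]) y hy ?_
            intro w hw
            rw [List.head?_reverse, List.getLast?_eq_getLast hxsne] at hw
            simp only [Option.mem_def, Option.some.injEq] at hw
            subst hw
            exact hadj
          exact List.mem_reverse.mp hmem
        -- index facts for neighbors of a
        have hafact : ∀ y ∈ s.filter (H.Adj a), xs.idxOf y ≠ 0 ∧ xs.idxOf y < xs.length := by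
          intro y hy
          obtain ⟨hys, hadj⟩ := Finset.mem_filter.mp hy
          have hyxs : y ∈ xs := hnbra y hys hadj
          have hidx : xs.idxOf y < xs.length := List.idxOf_lt_length_iff.mpr hyxs
          refine ⟨?_, hidx⟩
          intro h0
          apply H.ne_of_adj hadj
          have h2 := List.getElem_idxOf hidx
          simp only [h0] at h2
          rw [← h2]
          exact hxs0.symm
        have hbfact : ∀ y ∈ s.filter (H.Adj b),
            xs.idxOf y ≠ xs.length - 1 ∧ xs.idxOf y < xs.length := by
          intro y hy
          obtain ⟨hys, hadj⟩ := Finset.mem_filter.mp hy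
          have hyxs : y ∈ xs := hnbrb y hys hadj
          have hidx : xs.idxOf y < xs.length := List.idxOf_lt_length_iff.mpr hyxs
          refine ⟨?_, hidx⟩
          intro h0
          apply H.ne_of_adj hadj
          have h2 := List.getElem_idxOf hidx
          simp only [h0] at h2
          rw [← h2]
          exact hxslast.symm
        set A := (Finset.range (t1 - 1)).filter (fun i => H.Adj a (xs.getD (i + 1) a)) with hA
        set B := (Finset.range (t1 - 1)).filter (fun i => H.Adj b (xs.getD i b)) with hB
        have hdegA : degIn H s a ≤ A.card := by
          apply Finset.card_le_card_of_injOn (fun y => xs.idxOf y - 1)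
          · intro y hy
            obtain ⟨h0, hidx⟩ := hafact y hy
            have hadj : H.Adj a y := (Finset.mem_filter.mp hy).2
            simp only [Finset.mem_coe]
            rw [hA, Finset.mem_filter, Finset.mem_range]
            constructor
            · omega
            · have hix : xs.idxOf y - 1 + 1 = xs.idxOf y := by omega
              rw [hix, List.getD_eq_getElem?_getD, List.getElem?_eq_getElem hidx,
                Option.getD_some, List.getElem_idxOf hidx]
              exact hadj
          · intro y1 hy1 y2 hy2 heq
            obtain ⟨h01, hidx1⟩ := hafact y1 hy1
            obtain ⟨h02, hidx2⟩ := hafact y2 hy2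
            have heq' : xs.idxOf y1 - 1 = xs.idxOf y2 - 1 := heq
            have hieq : xs.idxOf y1 = xs.idxOf y2 := by omega
            have e1 := List.getElem_idxOf hidx1
            have e2 := List.getElem_idxOf hidx2
            rw [← e1, ← e2]
            simp only [hieq]
        have hdegB : degIn H s b ≤ B.card := by
          apply Finset.card_le_card_of_injOn (fun y => xs.idxOf y)
          · intro y hy
            obtain ⟨h0, hidx⟩ := hbfact y hy
            have hadj : H.Adj b y := (Finset.mem_filter.mp hy).2
            simp only [Finset.mem_coe]
            rw [hB, Finset.mem_filter, Finset.mem_range]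
            constructor
            · omega
            · rw [List.getD_eq_getElem?_getD, List.getElem?_eq_getElem hidx,
                Option.getD_some, List.getElem_idxOf hidx]
              exact hadj
          · intro y1 hy1 y2 hy2 heq
            obtain ⟨h01, hidx1⟩ := hbfact y1 hy1
            obtain ⟨h02, hidx2⟩ := hbfact y2 hy2
            have hieq : xs.idxOf y1 = xs.idxOf y2 := heq
            have e1 := List.getElem_idxOf hidx1
            have e2 := List.getElem_idxOf hidx2
            rw [← e1, ← e2]
            simp only [hieq]
        have hABcard : k - 1 ≤ A.card + B.card := by
          have h2a := hmindeg a has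
          have h2b := hmindeg b hbs
          omega
        have hABsub : A ∪ B ⊆ Finset.range (t1 - 1) :=
          Finset.union_subset (Finset.filter_subset _ _) (Finset.filter_subset _ _)
        have hABun : (A ∪ B).card ≤ t1 - 1 := by
          have := Finset.card_le_card hABsub
          simpa using this
        have hinterpos : 0 < (A ∩ B).card := by
          have h5 := Finset.card_union_add_card_inter A B
          omega
        obtain ⟨i, hiAB⟩ := Finset.card_pos.mp hinterpos
        have hiA := (Finset.mem_inter.mp hiAB).1
        have hiB := (Finset.mem_inter.mp hiAB).2
        rw [hA, Finset.mem_filter, Finset.mem_range] at hiA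
        rw [hB, Finset.mem_filter, Finset.mem_range] at hiB
        obtain ⟨hirange, hiadjA⟩ := hiA
        obtain ⟨_, hiadjB⟩ := hiB
        have hi1 : i + 1 < xs.length := by omega
        have hi0 : i < xs.length := by omega
        have hadjA : H.Adj a (xs[i + 1]'hi1) := by
          rwa [List.getD_eq_getElem?_getD, List.getElem?_eq_getElem hi1, Option.getD_some] at hiadjA
        have hadjB : H.Adj b (xs[i]'hi0) := by
          rwa [List.getD_eq_getElem?_getD, List.getElem?_eq_getElem hi0, Option.getD_some] at hiadjB
        set ys := xs.take (i + 1) ++ (xs.drop (i + 1)).reverse with hys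
        have hlys : ys.length = t1 := by
          rw [hys]
          simp only [List.length_append, List.length_take, List.length_reverse, List.length_drop]
          omega
        have hperm : ys.Perm xs := by
          conv_rhs => rw [← List.take_append_drop (i + 1) xs]
          exact List.Perm.append_left _ (List.reverse_perm _)
        have hlastTake : (xs.take (i + 1)).getLast? = some (xs[i]'hi0) := by
          rw [List.getLast?_eq_getElem?]
          have hlt : (xs.take (i + 1)).length = i + 1 := by simp; omega
          rw [hlt, Nat.add_sub_cancel, List.getElem?_eq_getElem (by rw [hlt]; omega)]
          congr 1
          exact List.getElem_take
        have hheadDropRev : (xs.drop (i + 1)).reverse.head? = some b := by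
          rw [List.head?_reverse, List.getLast?_eq_getElem?]
          have hld : (xs.drop (i + 1)).length = xs.length - (i + 1) := by simp
          rw [hld, List.getElem?_drop]
          have hixe : i + 1 + (xs.length - (i + 1) - 1) = xs.length - 1 := by omega
          rw [hixe, List.getElem?_eq_getElem (by omega)]
          rw [hxslast]
        have hheadys : ys.head? = some a := by
          rw [hys, List.head?_eq_getElem?,
            List.getElem?_append_left (by simp; omega)]
          rw [List.getElem?_eq_getElem (by simp; omega)]
          congr 1
          rw [List.getElem_take, hxs0]
        have hlastys : ys.getLast? = some (xs[i + 1]'hi1) := by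
          rw [hys, List.getLast?_append, List.getLast?_reverse, List.head?_drop,
            List.getElem?_eq_getElem hi1]
          rfl
        have hcyc : IsCycleIn H s ys := by
          refine ⟨?_, ?_, ?_, ?_⟩
          · rw [hys, List.isChain_append]
            refine ⟨hxs.1.take _, ?_, ?_⟩
            · rw [List.isChain_reverse]
              exact (hxs.1.drop _).imp fun u v h => h.symm
            · intro p hp q hq
              rw [hlastTake] at hp
              rw [hheadDropRev] at hq
              simp only [Option.mem_def, Option.some.injEq] at hp hq
              subst hp; subst hq
              exact hadjB.symm
          · intro p hp q hq
            rw [hheadys] at hp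
            rw [hlastys] at hq
            simp only [Option.mem_def, Option.some.injEq] at hp hq
            subst hp; subst hq
            exact hadjA.symm
          · exact hperm.symm.nodup hxs.2.1
          · intro x hx
            exact hxs.2.2 x (hperm.mem_iff.mp hx)
        have hout : ∃ w ∈ s, w ∉ ys := by
          by_contra hcon
          push_neg at hcon
          have hsub : s ⊆ ys.toFinset := fun w hw => List.mem_toFinset.mpr (hcon w hw)
          have h6 := Finset.card_le_card hsub
          have h7 : ys.toFinset.card = ys.length :=
            List.toFinset_card_of_nodup (hperm.symm.nodup hxs.2.1)
          omega
        obtain ⟨w, hws, hwys⟩ := hout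
        have hreachall : ∀ x ∈ s, ReachIn H s v0 x := by
          intro x hx
          have hxC : x ∈ C := by rw [hCeq]; exact hx
          exact (Finset.mem_filter.mp hxC).2
        have hsym : Symmetric (fun x y => H.Adj x y ∧ x ∈ s ∧ y ∈ s) :=
          fun x y h => ⟨h.1.symm, h.2.2, h.2.1⟩
        have hreach : ReachIn H s a w :=
          ((@Relation.ReflTransGen.symmetric _ _ ⟨fun _ _ h => hsym h⟩).symm _ _
            (hreachall a has)).trans (hreachall w hws)
        have hays : a ∈ ys := hperm.mem_iff.mpr (List.head_mem hxsne)
        obtain ⟨u, x, hu, hxs', hxnys, hadjux⟩ := reach_boundary hays hreach hwys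
        obtain ⟨zs, hzs, hlzs⟩ := cycle_extend hcyc hu hadjux hxs' hxnys
        have := hmax zs hzs
        omega
    · have hCss : C ⊂ s := ⟨hCsub, fun h => hCeq (Finset.Subset.antisymm hCsub h)⟩
      have hD : s \ C ⊂ s := by
        constructor
        · exact Finset.sdiff_subset
        · intro h
          have h9 := h hv0
          rw [Finset.mem_sdiff] at h9
          exact h9.2 hv0C
      have hnoedge : ∀ x ∈ C, ∀ y ∈ s \ C, ¬H.Adj x y := by
        intro x hx y hy hadj
        rw [Finset.mem_sdiff] at hy
        exact hy.2 (hclosed x hx y hy.1 hadj)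
      have hdisj : Disjoint C (s \ C) := Finset.disjoint_sdiff
      have hunion : C ∪ (s \ C) = s := Finset.union_sdiff_of_subset hCsub
      have hfreesub : ∀ t : Finset V, t ⊆ s → ∀ xs, IsPathIn H t xs → xs.length ≤ k - 1 :=
        fun t hts xs hxs => hfree xs ⟨hxs.1, hxs.2.1, fun x hx => hts (hxs.2.2 x hx)⟩
      have h1 := ih C hCss (hfreesub C hCsub)
      have h2 := ih (s \ C) hD (hfreesub _ Finset.sdiff_subset)
      have h3 := pairs_union (H := H) hdisj hnoedge
      rw [hunion] at h3
      have h4 := Finset.card_union_of_disjoint hdisj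
      rw [hunion] at h4
      rw [h3, h4, Nat.mul_add]
      omega



lemma pairs_eq_card (s : Finset V) :
    pairsIn H s = ((s ×ˢ s).filter fun p => H.Adj p.1 p.2).card := by
  rw [pairsIn, Finset.card_filter, Finset.sum_product]
  exact Finset.sum_congr rfl fun x _ => by rw [degIn, Finset.card_filter]
end EGaux

namespace TriAux


variable {V : Type*} {G : SimpleGraph V}

/-- niceness as a property of the vertex set -/
def NiceV (G : SimpleGraph V) (l : ℕ) (s : Set V) : Prop :=
  ∀ B : G.Subgraph, B.IsCopyOf (cycleGraph l) → ¬(s ⊆ B.verts ∨ B.verts ⊆ s)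

lemma nice_iff (A : G.Subgraph) (l : ℕ) : A.Nice (cycleGraph l) ↔ NiceV G l A.verts :=
  Iff.rfl

/-- the cycle subgraph spanned by a cyclic list -/
def cycSub (G : SimpleGraph V) (ys : List V) : G.Subgraph where
  verts := {x | x ∈ ys}
  Adj x y := G.Adj x y ∧ ∃ i : ℕ, ∃ h : i < ys.length,
    (x = ys[i] ∧ y = ys[(i + 1) % ys.length]'(Nat.mod_lt _ (Nat.lt_of_le_of_lt (Nat.zero_le i) h))) ∨
    (y = ys[i] ∧ x = ys[(i + 1) % ys.length]'(Nat.mod_lt _ (Nat.lt_of_le_of_lt (Nat.zero_le i) h)))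
  adj_sub h := h.1
  edge_vert {x y} h := by
    obtain ⟨-, i, hi, h | h⟩ := h
    · rw [h.1]; exact List.getElem_mem _
    · rw [h.2]; exact List.getElem_mem _
  symm := by
    constructor
    rintro x y ⟨hg, i, hi, h | h⟩
    · exact ⟨hg.symm, i, hi, Or.inr h⟩
    · exact ⟨hg.symm, i, hi, Or.inl h⟩

lemma exists_cycle_copy {l : ℕ} (hl : 2 ≤ l) (ys : List V) (hlen : ys.length = l)
    (hch : ys.IsChain G.Adj)
    (hcl : ∀ a ∈ ys.head?, ∀ b ∈ ys.getLast?, G.Adj b a)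
    (hnd : ys.Nodup) :
    ∃ B : G.Subgraph, B.IsCopyOf (cycleGraph l) ∧ ∀ x ∈ ys, x ∈ B.verts := by
  obtain ⟨m, rfl⟩ : ∃ m, l = m + 2 := ⟨l - 2, by omega⟩
  have hpos : 0 < ys.length := by omega
  have hne : ys ≠ [] := by
    intro h'; rw [h'] at hpos; simp at hpos
  have hconsec : ∀ i, ∀ h : i < ys.length,
      G.Adj (ys[i]) (ys[(i + 1) % ys.length]'(Nat.mod_lt _ hpos)) := by
    intro i h
    by_cases h2 : i + 1 < ys.length
    · have hmod : (i + 1) % ys.length = i + 1 := Nat.mod_eq_of_lt h2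
      have hc := List.isChain_iff_getElem.mp hch i (by omega)
      simp only [hmod]
      exact hc
    · have hieq : i = ys.length - 1 := by omega
      have hmod : (i + 1) % ys.length = 0 := by
        have h3 : i + 1 = ys.length := by omega
        rw [h3, Nat.mod_self]
      have h1 := hcl (ys.head hne) (by rw [List.head?_eq_head hne]; rfl)
        (ys.getLast hne) (by rw [List.getLast?_eq_getLast hne]; rfl)
      have e1 : ys.getLast hne = ys[i] := by
        rw [List.getLast_eq_getElem]; simp only [hieq]
      have e2 : ys.head hne = ys[(i + 1) % ys.length]'(Nat.mod_lt _ hpos) := by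
        rw [List.head_eq_getElem]; simp only [hmod]
      rw [← e1, ← e2]
      exact h1
  set B := cycSub G ys with hB
  have hverts : ∀ x ∈ ys, x ∈ B.verts := fun x hx => hx
  refine ⟨B, ?_, hverts⟩
  have hgetlt : ∀ i : Fin (m + 2), (i : ℕ) < ys.length := by
    intro i; rw [hlen]; exact i.isLt
  have hf : Function.Bijective (fun i : Fin (m + 2) =>
      (⟨ys[(i : ℕ)]'(hgetlt i), hverts _ (List.getElem_mem _)⟩ : ↥B.verts)) := by
    constructor
    · intro i j hij
      have h1 : ys[(i : ℕ)]'(hgetlt i) = ys[(j : ℕ)]'(hgetlt j) := congrArg Subtype.val hij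
      have h2 := (List.nodup_iff_injective_get.mp hnd)
        (a₁ := ⟨(i : ℕ), hgetlt i⟩) (a₂ := ⟨(j : ℕ), hgetlt j⟩)
      simp only [List.get_eq_getElem] at h2
      have h3 := h2 h1
      injection h3 with h4
      exact Fin.ext h4
    · rintro ⟨x, hx⟩
      obtain ⟨i, hi, hix⟩ := List.mem_iff_getElem.mp hx
      exact ⟨⟨i, by omega⟩, Subtype.ext hix⟩
  refine ⟨(RelIso.mk (Equiv.ofBijective _ hf) ?_).symm⟩
  intro i j
  simp only [Equiv.ofBijective_apply, SimpleGraph.Subgraph.coe_adj]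
  rw [SimpleGraph.cycleGraph_adj]
  have hgeteq : ∀ {i j : ℕ} (hij : i = j) (hi : i < ys.length),
      ys[i]'hi = ys[j]'(hij ▸ hi) := by
    intro i j hij hi; subst hij; rfl
  have hinj : ∀ {i j : ℕ} (hi : i < ys.length) (hj : j < ys.length),
      ys[i]'hi = ys[j]'hj → i = j := by
    intro i j hi hj hh
    have h2 := (List.nodup_iff_injective_get.mp hnd)
      (a₁ := ⟨i, hi⟩) (a₂ := ⟨j, hj⟩)
    simp only [List.get_eq_getElem] at h2
    have h3 := h2 hh
    injection h3
  constructor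
  · rintro ⟨-, t, ht, ⟨e1, e2⟩ | ⟨e1, e2⟩⟩
    · -- ys[i] = ys[t], ys[j] = ys[(t+1)%n] : j = i + 1
      have hi : (i : ℕ) = t := hinj _ _ e1
      have hj : (j : ℕ) = (t + 1) % ys.length := hinj _ _ e2
      right
      rw [sub_eq_iff_eq_add]
      apply Fin.ext
      rw [Fin.val_add, Fin.val_one]
      rw [hj, hlen, ← hi]
      rw [Nat.add_comm 1 (i : ℕ)]
    · have hi : (j : ℕ) = t := hinj _ _ e1
      have hj : (i : ℕ) = (t + 1) % ys.length := hinj _ _ e2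
      left
      rw [sub_eq_iff_eq_add]
      apply Fin.ext
      rw [Fin.val_add, Fin.val_one]
      rw [hj, hlen, ← hi]
      rw [Nat.add_comm 1 (j : ℕ)]
  · rintro (h | h)
    · -- i - j = 1, so i = j + 1 : use t := j
      have hij : (i : ℕ) = ((j : ℕ) + 1) % ys.length := by
        rw [sub_eq_iff_eq_add] at h
        rw [h, Fin.val_add, Fin.val_one, hlen, Nat.add_comm]
      have he := hgeteq hij.symm (Nat.mod_lt _ hpos)
      have hadj0 := hconsec (j : ℕ) (hgetlt j)
      rw [he] at hadj0
      exact ⟨hadj0.symm, (j : ℕ), hgetlt j, Or.inr ⟨rfl, he.symm⟩⟩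
    · have hij : (j : ℕ) = ((i : ℕ) + 1) % ys.length := by
        rw [sub_eq_iff_eq_add] at h
        rw [h, Fin.val_add, Fin.val_one, hlen, Nat.add_comm]
      have he := hgeteq hij.symm (Nat.mod_lt _ hpos)
      have hadj0 := hconsec (i : ℕ) (hgetlt i)
      rw [he] at hadj0
      exact ⟨hadj0, (i : ℕ), hgetlt i, Or.inl ⟨rfl, he.symm⟩⟩


/-- the complete subgraph on a vertex finset -/
def triSub (G : SimpleGraph V) (t : Finset V) : G.Subgraph where
  verts := ↑t
  Adj x y := x ∈ t ∧ y ∈ t ∧ x ≠ y ∧ G.Adj x y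
  adj_sub h := h.2.2.2
  edge_vert h := h.1
  symm := by
    constructor
    rintro x y ⟨h1, h2, h3, h4⟩
    exact ⟨h2, h1, h3.symm, h4.symm⟩

lemma triSub_isCopy {t : Finset V} (ht : t.card = 3)
    (hcl : ∀ x ∈ t, ∀ y ∈ t, x ≠ y → G.Adj x y) :
    (triSub G t).IsCopyOf (completeGraph (Fin 3)) := by
  classical
  haveI : Fintype ↥(triSub G t).verts := FinsetCoe.fintype t
  have hcard : Fintype.card ↥(triSub G t).verts = 3 := by
    calc Fintype.card ↥(triSub G t).verts = Fintype.card {x // x ∈ t} :=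
        Fintype.card_congr (Equiv.refl ↥(triSub G t).verts :
          ↥(triSub G t).verts ≃ {x // x ∈ t})
      _ = t.card := Fintype.card_coe t
      _ = 3 := ht
  refine ⟨RelIso.mk (Fintype.equivFinOfCardEq hcard) ?_⟩
  intro x y
  show (⊤ : SimpleGraph (Fin 3)).Adj _ _ ↔ _
  rw [SimpleGraph.top_adj, SimpleGraph.Subgraph.coe_adj]
  constructor
  · intro h
    have hxy : x ≠ y := fun he => h (by rw [he])
    have hxyv : (x : V) ≠ (y : V) := fun he => hxy (Subtype.ext he)
    exact ⟨x.2, y.2, hxyv, hcl x x.2 y y.2 hxyv⟩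
  · intro h
    exact (Fintype.equivFinOfCardEq hcard).injective.ne_iff.mpr
      (fun he => h.2.2.1 (congrArg Subtype.val he))

lemma copy_tri {A : G.Subgraph} (h : A.IsCopyOf (completeGraph (Fin 3))) :
    ∃ t : Finset V, t.card = 3 ∧ (∀ x ∈ t, ∀ y ∈ t, x ≠ y → G.Adj x y) ∧
      A = triSub G t := by
  classical
  obtain ⟨e⟩ := h
  haveI : Fintype ↥A.verts := Fintype.ofEquiv _ e.toEquiv.symm
  have hadj : ∀ x y : ↥A.verts, A.coe.Adj x y ↔ x ≠ y := by
    intro x y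
    rw [← e.map_rel_iff]
    show (⊤ : SimpleGraph (Fin 3)).Adj _ _ ↔ _
    rw [SimpleGraph.top_adj]
    exact e.toEquiv.injective.ne_iff
  have hcoet : (↑A.verts.toFinset : Set V) = A.verts := Set.coe_toFinset _
  refine ⟨A.verts.toFinset, ?_, ?_, ?_⟩
  · rw [Set.toFinset_card]
    rw [Fintype.card_congr e.toEquiv, Fintype.card_fin]
  · intro x hx y hy hxy
    rw [Set.mem_toFinset] at hx hy
    have h2 : A.coe.Adj ⟨x, hx⟩ ⟨y, hy⟩ :=
      (hadj _ _).mpr (fun he => hxy (congrArg Subtype.val he))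
    exact A.adj_sub ((SimpleGraph.Subgraph.coe_adj _ _ _).mp h2)
  · ext x y
    · show x ∈ A.verts ↔ x ∈ (↑A.verts.toFinset : Set V)
      rw [hcoet]
    · show A.Adj x y ↔ _
      constructor
      · intro hAdj
        have hx : x ∈ A.verts := A.edge_vert hAdj
        have hy : y ∈ A.verts := A.edge_vert hAdj.symm
        exact ⟨Set.mem_toFinset.mpr hx, Set.mem_toFinset.mpr hy,
          (A.adj_sub hAdj).ne, A.adj_sub hAdj⟩
      · rintro ⟨hx, hy, hne, -⟩
        rw [Set.mem_toFinset] at hx hy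
        have h2 : A.coe.Adj ⟨x, hx⟩ ⟨y, hy⟩ :=
          (hadj _ _).mpr (fun he => hne (congrArg Subtype.val he))
        exact (SimpleGraph.Subgraph.coe_adj _ _ _).mp h2

open scoped Classical in

lemma nat_card_filter {W : Type*} [Fintype W] (p : W → Prop) [DecidablePred p] :
    Nat.card {x // p x} = (Finset.univ.filter p).card := by
  rw [Nat.card_eq_fintype_card, Fintype.card_subtype]

lemma card_tri (l : ℕ) (P : Set V → Prop) :
    Nat.card {A : G.Subgraph // A.IsCopyOf (completeGraph (Fin 3)) ∧
        A.Nice (cycleGraph l) ∧ P A.verts} =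
      Nat.card {t : Finset V // t.card = 3 ∧
        (∀ x ∈ t, ∀ y ∈ t, x ≠ y → G.Adj x y) ∧ NiceV G l ↑t ∧ P ↑t} := by
  refine (Nat.card_congr (Equiv.ofBijective
    (fun tp : {t : Finset V // t.card = 3 ∧
        (∀ x ∈ t, ∀ y ∈ t, x ≠ y → G.Adj x y) ∧ NiceV G l ↑t ∧ P ↑t} =>
      (⟨triSub G tp.1, by
        obtain ⟨h3, hcl, hnice, hP⟩ := tp.2
        exact ⟨triSub_isCopy h3 hcl, hnice, hP⟩⟩ :
        {A : G.Subgraph // A.IsCopyOf (completeGraph (Fin 3)) ∧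
          A.Nice (cycleGraph l) ∧ P A.verts}))
    ⟨?_, ?_⟩)).symm
  · intro t1 t2 heq
    apply Subtype.ext
    have h0 : triSub G ↑t1 = triSub G ↑t2 := congrArg Subtype.val heq
    have h1 := congrArg SimpleGraph.Subgraph.verts h0
    exact Finset.coe_injective h1
  · rintro ⟨A, hcopy, hnice, hP⟩
    obtain ⟨t, h3, hcl, hAeq⟩ := copy_tri hcopy
    have hverts : A.verts = ↑t := by rw [hAeq]; rfl
    refine ⟨⟨t, h3, hcl, ?_, ?_⟩, ?_⟩
    · rw [← hverts]; exact hnice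
    · rw [← hverts]; exact hP
    · exact Subtype.ext hAeq.symm


/-- the link graph at `v`: edges of nice triangles through `v` -/
def linkGraph (G : SimpleGraph V) (l : ℕ) (v : V) : SimpleGraph V where
  Adj x y := G.Adj v x ∧ G.Adj v y ∧ G.Adj x y ∧ NiceV G l {v, x, y}
  symm := by
    constructor
    rintro x y ⟨h1, h2, h3, h4⟩
    refine ⟨h2, h1, h3.symm, ?_⟩
    rw [Set.pair_comm y x]
    exact h4
  loopless := ⟨fun x h => G.loopless.irrefl x h.2.2.1⟩

open scoped Classical in
lemma link_free [Fintype V] (l : ℕ) (hl : 4 ≤ l) (v : V) :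
    ∀ xs : List V, EGaux.IsPathIn (linkGraph G l v) (G.neighborFinset v) xs →
      xs.length ≤ (l - 1) - 1 := by
  intro xs hxs
  by_contra hcon
  push_neg at hcon
  set Lv := linkGraph G l v with hLv
  set ws := xs.take (l - 1) with hws
  have hlws : ws.length = l - 1 := by
    rw [hws, List.length_take]
    omega
  have hwpath : EGaux.IsPathIn Lv (G.neighborFinset v) ws :=
    ⟨hxs.1.take _, (List.take_sublist _ _).nodup hxs.2.1,
      fun x hx => hxs.2.2 x (List.mem_of_mem_take hx)⟩
  have hwsmem : ∀ x ∈ ws, G.Adj v x := fun x hx =>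
    (SimpleGraph.mem_neighborFinset G v x).mp (hwpath.2.2 x hx)
  have hwsne : ws ≠ [] := by
    intro h; rw [h] at hlws; simp at hlws; omega
  set cs := v :: ws with hcs
  have hcslen : cs.length = l := by
    rw [hcs, List.length_cons, hlws]
    omega
  have hchain : cs.IsChain G.Adj := by
    rw [hcs, List.isChain_cons]
    refine ⟨?_, hwpath.1.imp fun a b h => h.2.2.1⟩
    intro w hw
    rw [List.head?_eq_head hwsne] at hw
    simp only [Option.mem_def, Option.some.injEq] at hw
    subst hw
    exact hwsmem _ (List.head_mem hwsne)
  have hclose : ∀ a ∈ cs.head?, ∀ b ∈ cs.getLast?, G.Adj b a := by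
    intro a ha b hb
    rw [hcs, List.head?_cons] at ha
    simp only [Option.mem_def, Option.some.injEq] at ha
    subst ha
    have hgl : cs.getLast? = ws.getLast? := by
      rw [hcs]
      match ws, hwsne with
      | w :: ws', _ => rw [List.getLast?_cons_cons]
    rw [hgl, List.getLast?_eq_getLast hwsne] at hb
    simp only [Option.mem_def, Option.some.injEq] at hb
    subst hb
    exact (hwsmem _ (List.getLast_mem hwsne)).symm
  have hnodup : cs.Nodup := by
    rw [hcs, List.nodup_cons]
    exact ⟨fun hv => G.loopless.irrefl v (hwsmem v hv), hwpath.2.1⟩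
  obtain ⟨B, hBcopy, hBsub⟩ := exists_cycle_copy (by omega) cs hcslen hchain hclose hnodup
  have h0lt : 0 < ws.length := by omega
  have h1lt : 1 < ws.length := by omega
  have hx01 : Lv.Adj (ws[0]'h0lt) (ws[1]'h1lt) := by
    have hc := List.isChain_iff_getElem.mp hwpath.1 0 (by omega)
    exact hc
  have hnice : NiceV G l {v, ws[0]'h0lt, ws[1]'h1lt} := hx01.2.2.2
  apply hnice B hBcopy
  left
  intro z hz
  rcases hz with rfl | hz
  · exact hBsub _ (by rw [hcs]; exact List.mem_cons_self)
  · rcases hz with rfl | hz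
    · exact hBsub _ (by rw [hcs]; exact List.mem_cons_of_mem _ (List.getElem_mem _))
    · rcases hz with rfl
      exact hBsub _ (by rw [hcs]; exact List.mem_cons_of_mem _ (List.getElem_mem _))

open scoped Classical in
lemma fiber_count [Fintype V] (G : SimpleGraph V) (l : ℕ) (v : V) :
    ((G.neighborFinset v ×ˢ G.neighborFinset v).filter
        (fun p => (linkGraph G l v).Adj p.1 p.2)).card =
      2 * (Finset.univ.filter (fun t : Finset V => t.card = 3 ∧
        (∀ x ∈ t, ∀ y ∈ t, x ≠ y → G.Adj x y) ∧ NiceV G l ↑t ∧ v ∈ (↑t : Set V))).card := by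
  set s := G.neighborFinset v with hs
  set Lv := linkGraph G l v with hLv
  set Tv := Finset.univ.filter (fun t : Finset V => t.card = 3 ∧
    (∀ x ∈ t, ∀ y ∈ t, x ≠ y → G.Adj x y) ∧ NiceV G l ↑t ∧ v ∈ (↑t : Set V)) with hTv
  have hmaps : ∀ p ∈ (s ×ˢ s).filter (fun p => Lv.Adj p.1 p.2),
      ({v, p.1, p.2} : Finset V) ∈ Tv := by
    rintro ⟨x, y⟩ hp
    rw [Finset.mem_filter, Finset.mem_product] at hp
    obtain ⟨⟨hxs, hys⟩, hadj⟩ := hp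
    have hvx : G.Adj v x := (SimpleGraph.mem_neighborFinset G v x).mp hxs
    have hvy : G.Adj v y := (SimpleGraph.mem_neighborFinset G v y).mp hys
    have hxy : G.Adj x y := hadj.2.2.1
    rw [hTv, Finset.mem_filter]
    refine ⟨Finset.mem_univ _, ?_, ?_, ?_, ?_⟩
    · exact Finset.card_eq_three.mpr ⟨v, x, y, hvx.ne, hvy.ne, hxy.ne, rfl⟩
    · intro a ha b hb hab
      simp only [Finset.mem_insert, Finset.mem_singleton] at ha hb
      rcases ha with rfl | rfl | rfl <;> rcases hb with rfl | rfl | rfl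
      · exact absurd rfl hab
      · exact hvx
      · exact hvy
      · exact hvx.symm
      · exact absurd rfl hab
      · exact hxy
      · exact hvy.symm
      · exact hxy.symm
      · exact absurd rfl hab
    · have hc : (↑({v, x, y} : Finset V) : Set V) = ({v, x, y} : Set V) := by
        simp only [Finset.coe_insert, Finset.coe_singleton]
      rw [hc]
      exact hadj.2.2.2
    · simp
  rw [Finset.card_eq_sum_card_fiberwise hmaps]
  have hfib : ∀ t ∈ Tv, (((s ×ˢ s).filter (fun p => Lv.Adj p.1 p.2)).filter
      (fun p => ({v, p.1, p.2} : Finset V) = t)).card = 2 := by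
    intro t ht
    rw [hTv, Finset.mem_filter] at ht
    obtain ⟨-, hcard3, hclq, hniceT, hvt'⟩ := ht
    have hvt : v ∈ t := hvt'
    have h2 : (t.erase v).card = 2 := by
      rw [Finset.card_erase_of_mem hvt, hcard3]
    obtain ⟨x, y, hxy, hpair⟩ := Finset.card_eq_two.mp h2
    have hxe : x ∈ t.erase v := by rw [hpair]; simp
    have hye : y ∈ t.erase v := by rw [hpair]; simp
    have hxt : x ∈ t := Finset.mem_of_mem_erase hxe
    have hyt : y ∈ t := Finset.mem_of_mem_erase hye
    have hxv : x ≠ v := (Finset.mem_erase.mp hxe).1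
    have hyv : y ≠ v := (Finset.mem_erase.mp hye).1
    have ht' : t = {v, x, y} := by
      rw [← Finset.insert_erase hvt, hpair]
    have hvxA : G.Adj v x := hclq v hvt x hxt (Ne.symm hxv)
    have hvyA : G.Adj v y := hclq v hvt y hyt (Ne.symm hyv)
    have hxyA : G.Adj x y := hclq x hxt y hyt hxy
    have hcoe : (↑t : Set V) = ({v, x, y} : Set V) := by
      rw [ht']
      simp only [Finset.coe_insert, Finset.coe_singleton]
    have hfeq : ((s ×ˢ s).filter (fun p => Lv.Adj p.1 p.2)).filter
        (fun p => ({v, p.1, p.2} : Finset V) = t) = {(x, y), (y, x)} := by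
      ext ⟨p1, p2⟩
      simp only [Finset.mem_filter, Finset.mem_product, Finset.mem_insert,
        Finset.mem_singleton, Prod.mk.injEq]
      constructor
      · rintro ⟨⟨⟨hp1, hp2⟩, hadj⟩, heq⟩
        have hp1v : p1 ≠ v := fun h =>
          G.loopless.irrefl v (h ▸ (SimpleGraph.mem_neighborFinset G v p1).mp hp1)
        have hp2v : p2 ≠ v := fun h =>
          G.loopless.irrefl v (h ▸ (SimpleGraph.mem_neighborFinset G v p2).mp hp2)
        have hp12 : p1 ≠ p2 := hadj.2.2.1.ne
        have herase : ({p1, p2} : Finset V) = {x, y} := by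
          have e1 : ({v, p1, p2} : Finset V).erase v = {p1, p2} := by
            rw [Finset.erase_insert]
            simp only [Finset.mem_insert, Finset.mem_singleton]
            push_neg
            exact ⟨Ne.symm hp1v, Ne.symm hp2v⟩
          calc ({p1, p2} : Finset V) = ({v, p1, p2} : Finset V).erase v := e1.symm
            _ = t.erase v := by rw [heq]
            _ = {x, y} := hpair
        have hp1mem : p1 ∈ ({x, y} : Finset V) := by
          rw [← herase]; simp
        rcases Finset.mem_insert.mp hp1mem with rfl | hp1y
        · refine Or.inl ⟨rfl, ?_⟩
          have hymem : y ∈ ({p1, p2} : Finset V) := by rw [herase]; simp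
          rcases Finset.mem_insert.mp hymem with hh | hh
          · exact absurd hh.symm hxy
          · rw [Finset.mem_singleton] at hh
            exact hh.symm
        · rw [Finset.mem_singleton] at hp1y
          subst hp1y
          refine Or.inr ⟨rfl, ?_⟩
          have hxmem : x ∈ ({p1, p2} : Finset V) := by rw [herase]; simp
          rcases Finset.mem_insert.mp hxmem with hh | hh
          · exact absurd hh hxy
          · rw [Finset.mem_singleton] at hh
            exact hh.symm
      · have hnice2 : NiceV G l ({v, x, y} : Set V) := by rw [← hcoe]; exact hniceT
        rintro (⟨h1, h2⟩ | ⟨h1, h2⟩)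
        · refine ⟨⟨⟨?_, ?_⟩, ?_⟩, ?_⟩
          · rw [h1]; exact (SimpleGraph.mem_neighborFinset G v x).mpr hvxA
          · rw [h2]; exact (SimpleGraph.mem_neighborFinset G v y).mpr hvyA
          · rw [h1, h2]; exact ⟨hvxA, hvyA, hxyA, hnice2⟩
          · rw [h1, h2]; exact ht'.symm
        · refine ⟨⟨⟨?_, ?_⟩, ?_⟩, ?_⟩
          · rw [h1]; exact (SimpleGraph.mem_neighborFinset G v y).mpr hvyA
          · rw [h2]; exact (SimpleGraph.mem_neighborFinset G v x).mpr hvxA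
          · rw [h1, h2]
            refine ⟨hvyA, hvxA, hxyA.symm, ?_⟩
            rw [Set.pair_comm y x]
            exact hnice2
          · rw [h1, h2, ht']
            exact congrArg (insert v) (Finset.pair_comm y x)
    rw [hfeq]
    rw [Finset.card_insert_of_notMem, Finset.card_singleton]
    simp only [Finset.mem_singleton, Prod.mk.injEq, not_and]
    intro h1
    exact absurd h1 hxy
  calc ∑ t ∈ Tv, (((s ×ˢ s).filter (fun p => Lv.Adj p.1 p.2)).filter
      (fun p => ({v, p.1, p.2} : Finset V) = t)).card
      = ∑ _t ∈ Tv, 2 := Finset.sum_congr rfl hfib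
    _ = 2 * Tv.card := by rw [Finset.sum_const, smul_eq_mul, Nat.mul_comm]

open scoped Classical in
lemma vertex_bound [Fintype V] (G : SimpleGraph V) (l : ℕ) (hl : 4 ≤ l) (v : V) :
    2 * Nat.card {t : Finset V // t.card = 3 ∧
      (∀ x ∈ t, ∀ y ∈ t, x ≠ y → G.Adj x y) ∧ NiceV G l ↑t ∧ v ∈ (↑t : Set V)}
      ≤ (l - 3) * (G.neighborFinset v).card := by
  rw [nat_card_filter]
  have hEG := EGaux.EG (H := linkGraph G l v) (l - 1) (G.neighborFinset v) (link_free l hl v)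
  rw [EGaux.pairs_eq_card] at hEG
  rw [fiber_count G l v] at hEG
  have h13 : l - 1 - 2 = l - 3 := by omega
  rw [h13] at hEG
  exact hEG

open scoped Classical in
lemma global_bound [Fintype V] (G : SimpleGraph V) (l : ℕ) (hl : 4 ≤ l) :
    3 * Nat.card {t : Finset V // t.card = 3 ∧
      (∀ x ∈ t, ∀ y ∈ t, x ≠ y → G.Adj x y) ∧ NiceV G l ↑t}
      ≤ (l - 3) * G.edgeFinset.card := by
  rw [nat_card_filter]
  set T := Finset.univ.filter (fun t : Finset V => t.card = 3 ∧
    (∀ x ∈ t, ∀ y ∈ t, x ≠ y → G.Adj x y) ∧ NiceV G l ↑t) with hT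
  have h1 : ∀ v : V, Finset.univ.filter (fun t : Finset V => t.card = 3 ∧
      (∀ x ∈ t, ∀ y ∈ t, x ≠ y → G.Adj x y) ∧ NiceV G l ↑t ∧ v ∈ (↑t : Set V)) =
      T.filter (fun t => v ∈ t) := by
    intro v
    rw [hT, Finset.filter_filter]
    apply Finset.filter_congr
    intro t _
    simp only [Finset.mem_coe, and_assoc]
  have hsum : ∑ v : V, (Finset.univ.filter (fun t : Finset V => t.card = 3 ∧
      (∀ x ∈ t, ∀ y ∈ t, x ≠ y → G.Adj x y) ∧ NiceV G l ↑t ∧ v ∈ (↑t : Set V))).card =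
      3 * T.card := by
    calc ∑ v : V, (Finset.univ.filter (fun t : Finset V => t.card = 3 ∧
        (∀ x ∈ t, ∀ y ∈ t, x ≠ y → G.Adj x y) ∧ NiceV G l ↑t ∧ v ∈ (↑t : Set V))).card
        = ∑ v : V, (T.filter (fun t => v ∈ t)).card :=
          Finset.sum_congr rfl fun v _ => by rw [h1 v]
      _ = ∑ v : V, ∑ t ∈ T, if v ∈ t then 1 else 0 :=
          Finset.sum_congr rfl fun v _ => Finset.card_filter _ _
      _ = ∑ t ∈ T, ∑ v : V, if v ∈ t then 1 else 0 := Finset.sum_comm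
      _ = ∑ t ∈ T, t.card := by
          refine Finset.sum_congr rfl fun t _ => ?_
          rw [← Finset.card_filter, Finset.filter_univ_mem]
      _ = ∑ _t ∈ T, 3 := by
          refine Finset.sum_congr rfl fun t ht => ?_
          exact (Finset.mem_filter.mp ht).2.1
      _ = 3 * T.card := by rw [Finset.sum_const, smul_eq_mul, Nat.mul_comm]
  have hdeg : ∑ v : V, (l - 3) * (G.neighborFinset v).card =
      (l - 3) * (2 * G.edgeFinset.card) := by
    rw [← Finset.mul_sum]
    congr 1
    exact SimpleGraph.sum_degrees_eq_twice_card_edges G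
  have hsum2 : ∑ v : V, 2 * (Finset.univ.filter (fun t : Finset V => t.card = 3 ∧
      (∀ x ∈ t, ∀ y ∈ t, x ≠ y → G.Adj x y) ∧ NiceV G l ↑t ∧ v ∈ (↑t : Set V))).card ≤
      ∑ v : V, (l - 3) * (G.neighborFinset v).card := by
    refine Finset.sum_le_sum fun v _ => ?_
    have hv := vertex_bound G l hl v
    rwa [nat_card_filter] at hv
  rw [← Finset.mul_sum, hsum, hdeg] at hsum2
  have hfin : 2 * (3 * T.card) ≤ 2 * ((l - 3) * G.edgeFinset.card) := by
    calc 2 * (3 * T.card) ≤ (l - 3) * (2 * G.edgeFinset.card) := hsum2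
      _ = 2 * ((l - 3) * G.edgeFinset.card) := by ring
  exact Nat.le_of_mul_le_mul_left hfin (by norm_num)

end TriAux

open TriAux in
/-- For `ℓ ≥ 4`, any graph `G` has at most `(ℓ-3)|E(G)|/3` triangles aligning with no copy
of `C_ℓ`; moreover every vertex `v` lies in at most `(ℓ-3)d(v)/2` such triangles. -/
theorem niceTriangles_le {V : Type*} [Fintype V] (l : ℕ) (hl : 4 ≤ l) (G : SimpleGraph V) :
    (niceCopyCount (completeGraph (Fin 3)) (cycleGraph l) G : ℝ)
      ≤ ((l : ℝ) - 3) * (G.edgeSet.ncard : ℝ) / 3 ∧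
    ∀ v : V,
      (Nat.card {A : G.Subgraph // A.IsCopyOf (completeGraph (Fin 3)) ∧
          A.Nice (cycleGraph l) ∧ v ∈ A.verts} : ℝ)
        ≤ ((l : ℝ) - 3) * ((G.neighborSet v).ncard : ℝ) / 2 := by
  classical
  have hl3 : ((l - 3 : ℕ) : ℝ) = (l : ℝ) - 3 := by
    rw [Nat.cast_sub (by omega : 3 ≤ l)]
    norm_num
  constructor
  · -- global bound
    have hbridge : niceCopyCount (completeGraph (Fin 3)) (cycleGraph l) G =
        Nat.card {t : Finset V // t.card = 3 ∧
          (∀ x ∈ t, ∀ y ∈ t, x ≠ y → G.Adj x y) ∧ NiceV G l ↑t} := by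
      calc niceCopyCount (completeGraph (Fin 3)) (cycleGraph l) G
          = Nat.card {A : G.Subgraph // A.IsCopyOf (completeGraph (Fin 3)) ∧
              A.Nice (cycleGraph l) ∧ True} :=
            Nat.card_congr (Equiv.subtypeEquivRight fun A => by tauto)
        _ = Nat.card {t : Finset V // t.card = 3 ∧
              (∀ x ∈ t, ∀ y ∈ t, x ≠ y → G.Adj x y) ∧ NiceV G l ↑t ∧ True} :=
            card_tri l (fun _ => True)
        _ = Nat.card {t : Finset V // t.card = 3 ∧
              (∀ x ∈ t, ∀ y ∈ t, x ≠ y → G.Adj x y) ∧ NiceV G l ↑t} :=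
            Nat.card_congr (Equiv.subtypeEquivRight fun t => by tauto)
    have hE : G.edgeSet.ncard = G.edgeFinset.card := by
      rw [← SimpleGraph.coe_edgeFinset, Set.ncard_coe_finset]
    have h3 := global_bound G l hl
    rw [← hbridge] at h3
    have h3' : ((3 * niceCopyCount (completeGraph (Fin 3)) (cycleGraph l) G : ℕ) : ℝ) ≤
        (((l - 3) * G.edgeFinset.card : ℕ) : ℝ) := Nat.cast_le.mpr h3
    push_cast at h3'
    rw [hl3] at h3'
    rw [hE]
    push_cast
    linarith
  · intro v
    have hcv := card_tri (G := G) l (fun s : Set V => v ∈ s)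
    have hnb : (G.neighborSet v).ncard = (G.neighborFinset v).card := by
      rw [Set.ncard_eq_toFinset_card', SimpleGraph.neighborFinset_def,
        Set.toFinset_card]
    have h4 := vertex_bound G l hl v
    rw [← hcv] at h4
    have h4' : ((2 * Nat.card {A : G.Subgraph // A.IsCopyOf (completeGraph (Fin 3)) ∧
        A.Nice (cycleGraph l) ∧ v ∈ A.verts} : ℕ) : ℝ) ≤
        (((l - 3) * (G.neighborFinset v).card : ℕ) : ℝ) := Nat.cast_le.mpr h4
    push_cast at h4'
    rw [hl3] at h4'
    rw [hnb]
    push_cast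
    linarith
end

section
/- Let t and t' be integers with 2 < t < t'. Then ex_re(n,K_{2,t},K_{2,t'}) ≤ C(t'−1, t)·C(n,2), where C(·,·) denotes the binomial coefficient. In particular, in any graph G, if two vertices u and v have at least t' common neighbors, then every copy of K_{2,t} having {u,v} as its smaller part aligns with a copy of K_{2,t'} in G. -/
open SimpleGraph

lemma union_equiv_adj {V W₁ W₂ : Type*} {L S : Set V} (hdisj : Disjoint L S)
    [DecidablePred (· ∈ L)] (eL : L ≃ W₁) (eS : S ≃ W₂) (a b : (L ∪ S : Set V)) :
    (completeBipartiteGraph W₁ W₂).Adj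
        (((Equiv.Set.union hdisj).trans (eL.sumCongr eS)) a)
        (((Equiv.Set.union hdisj).trans (eL.sumCongr eS)) b) ↔
      ((a : V) ∈ L ∧ (b : V) ∈ S ∨ (b : V) ∈ L ∧ (a : V) ∈ S) := by
  have hmem : ∀ c : (L ∪ S : Set V), (c : V) ∉ L → (c : V) ∈ S := by
    rintro c hc
    rcases c.2 with h | h
    · exact absurd h hc
    · exact h
  have hnot : ∀ x : V, x ∈ S → x ∉ L := fun x hx hx' => Set.disjoint_left.mp hdisj hx' hx
  have hnot' : ∀ x : V, x ∈ L → x ∉ S := fun x hx hx' => Set.disjoint_left.mp hdisj hx hx'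
  by_cases ha : (a : V) ∈ L <;> by_cases hb : (b : V) ∈ L
  · rw [Equiv.trans_apply, Equiv.trans_apply,
      Equiv.Set.union_apply_left hdisj ha, Equiv.Set.union_apply_left hdisj hb]
    simp only [Equiv.sumCongr_apply, Sum.map_inl, completeBipartiteGraph_adj,
      Sum.isLeft_inl, Sum.isRight_inl]
    constructor
    · rintro (⟨h1, h2⟩ | ⟨h1, h2⟩) <;> simp_all
    · rintro (⟨_, h⟩ | ⟨_, h⟩)
      · exact absurd h (hnot' _ hb)
      · exact absurd h (hnot' _ ha)
  · rw [Equiv.trans_apply, Equiv.trans_apply,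
      Equiv.Set.union_apply_left hdisj ha, Equiv.Set.union_apply_right hdisj (hmem b hb)]
    simp only [Equiv.sumCongr_apply, Sum.map_inl, Sum.map_inr, completeBipartiteGraph_adj,
      Sum.isLeft_inl, Sum.isRight_inl, Sum.isLeft_inr, Sum.isRight_inr]
    constructor
    · intro _; exact Or.inl ⟨ha, hmem b hb⟩
    · intro _; simp
  · rw [Equiv.trans_apply, Equiv.trans_apply,
      Equiv.Set.union_apply_right hdisj (hmem a ha), Equiv.Set.union_apply_left hdisj hb]
    simp only [Equiv.sumCongr_apply, Sum.map_inl, Sum.map_inr, completeBipartiteGraph_adj,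
      Sum.isLeft_inl, Sum.isRight_inl, Sum.isLeft_inr, Sum.isRight_inr]
    constructor
    · intro _; exact Or.inr ⟨hb, hmem a ha⟩
    · intro _; simp
  · rw [Equiv.trans_apply, Equiv.trans_apply,
      Equiv.Set.union_apply_right hdisj (hmem a ha), Equiv.Set.union_apply_right hdisj (hmem b hb)]
    simp only [Equiv.sumCongr_apply, Sum.map_inr, completeBipartiteGraph_adj,
      Sum.isLeft_inr, Sum.isRight_inr]
    constructor
    · rintro (⟨h1, h2⟩ | ⟨h1, h2⟩) <;> simp_all
    · rintro (⟨h, _⟩ | ⟨h, _⟩)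
      · exact absurd h ha
      · exact absurd h hb

/-- The bipartite subgraph on `{u,v} ∪ S`. -/
def bipSG {V : Type*} (G : SimpleGraph V) (u v : V) (S : Set V)
    (hS : ∀ x ∈ S, G.Adj u x ∧ G.Adj v x) : G.Subgraph where
  verts := {u, v} ∪ S
  Adj x y := (x ∈ ({u, v} : Set V) ∧ y ∈ S) ∨ (y ∈ ({u, v} : Set V) ∧ x ∈ S)
  adj_sub := by
    rintro x y (⟨hx, hy⟩ | ⟨hy, hx⟩)
    · rcases hx with rfl | rfl
      · exact (hS y hy).1
      · exact (hS y hy).2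
    · rcases hy with rfl | rfl
      · exact (hS x hx).1.symm
      · exact (hS x hx).2.symm
  edge_vert := by
    rintro x y (⟨hx, _⟩ | ⟨_, hx⟩)
    · exact Or.inl hx
    · exact Or.inr hx
  symm := ⟨by rintro x y (h | h); exacts [Or.inr h, Or.inl h]⟩

lemma bipSG_isCopyOf {V : Type*} {G : SimpleGraph V} {u v : V} {S : Set V}
    (hS : ∀ x ∈ S, G.Adj u x ∧ G.Adj v x) (huv : u ≠ v) (hu : u ∉ S) (hv : v ∉ S)
    {m : ℕ} (hSfin : S.Finite) (hcard : S.ncard = m) :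
    (bipSG G u v S hS).IsCopyOf (completeBipartiteGraph (Fin 2) (Fin m)) := by
  classical
  haveI : Finite S := hSfin.to_subtype
  have hdisj : Disjoint ({u, v} : Set V) S := by
    rw [Set.disjoint_left]
    rintro x (rfl | rfl) hxS
    exacts [hu hxS, hv hxS]
  have hLfin : ({u, v} : Set V).Finite := (Set.finite_singleton v).insert u
  haveI : Finite ({u, v} : Set V) := hLfin.to_subtype
  have eL : ({u, v} : Set V) ≃ Fin 2 :=
    Finite.equivFinOfCardEq (by rw [Nat.card_coe_set_eq, Set.ncard_pair huv])
  have eS : S ≃ Fin m :=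
    Finite.equivFinOfCardEq (by rw [Nat.card_coe_set_eq, hcard])
  refine ⟨⟨((Equiv.Set.union hdisj).trans (Equiv.sumCongr eL eS)), ?_⟩⟩
  intro a b
  exact union_equiv_adj hdisj eL eS a b

lemma nonneighbor {t : ℕ} (ht : 2 < t) (z : Fin 2 ⊕ Fin t) :
    ∃ z', z' ≠ z ∧ ¬ (completeBipartiteGraph (Fin 2) (Fin t)).Adj z z' := by
  rcases z with i | j
  · refine ⟨Sum.inl (i + 1), ?_, by simp⟩
    simp only [ne_eq, Sum.inl.injEq]
    intro h
    have := congrArg Fin.val h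
    simp [Fin.add_def] at this
    omega
  · by_cases hj : j = ⟨0, by omega⟩
    · refine ⟨Sum.inr ⟨1, by omega⟩, ?_, by simp⟩
      simp only [ne_eq, Sum.inr.injEq, hj]
      intro h
      have := congrArg Fin.val h
      simp at this
    · exact ⟨Sum.inr ⟨0, by omega⟩, by simpa [ne_eq, Sum.inr.injEq] using fun h => hj h.symm,
        by simp⟩

lemma key_lemma {V : Type*} {G : SimpleGraph V} {t t' : ℕ} (ht : 2 < t) (htt' : t < t')
    (u v : V) (hcn : t' ≤ (G.neighborSet u ∩ G.neighborSet v).ncard)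
    (A : G.Subgraph) (hA : A.IsCopyOf (completeBipartiteGraph (Fin 2) (Fin t)))
    (hu : u ∈ A.verts) (hv : v ∈ A.verts)
    (hadj : ∀ w ∈ A.verts, w ≠ u → w ≠ v → A.Adj u w ∧ A.Adj v w) :
    ∃ B : G.Subgraph, B.IsCopyOf (completeBipartiteGraph (Fin 2) (Fin t')) ∧
      A.Aligns B := by
  classical
  obtain ⟨e⟩ := hA
  haveI : Finite A.verts := Finite.of_equiv _ e.toEquiv.symm
  have hAfin : A.verts.Finite := Set.toFinite _
  have hVcard : A.verts.ncard = t + 2 := by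
    rw [← Nat.card_coe_set_eq, Nat.card_congr e.toEquiv]
    simp [Nat.card_sum, Nat.add_comm]
  -- u ≠ v
  have huv : u ≠ v := by
    intro h
    obtain ⟨z', hz', hnadj⟩ := nonneighbor ht (e ⟨u, hu⟩)
    set y := e.symm z' with hy
    have hyA : (y : V) ∈ A.verts := y.2
    have hyu : (y : V) ≠ u := by
      intro hval
      apply hz'
      have : y = (⟨u, hu⟩ : A.verts) := Subtype.ext hval
      rw [hy] at this
      have := congrArg e this
      simpa using this
    have hadj' := (hadj _ hyA hyu (h ▸ hyu)).1
    have : A.coe.Adj ⟨u, hu⟩ y := hadj'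
    rw [← e.map_adj_iff] at this
    rw [hy] at this
    simp only [RelIso.apply_symm_apply] at this
    exact hnadj this
  -- the common neighborhood
  set C := G.neighborSet u ∩ G.neighborSet v with hC
  have hCfin : C.Finite := by
    by_contra h
    rw [Set.Infinite.ncard (by exact h)] at hcn
    omega
  set W := A.verts \ {u, v} with hW
  have hWsub : W ⊆ C := by
    rintro w ⟨hwA, hwuv⟩
    simp only [Set.mem_insert_iff, Set.mem_singleton_iff, not_or] at hwuv
    obtain ⟨h1, h2⟩ := hadj w hwA hwuv.1 hwuv.2
    exact ⟨A.adj_sub h1, A.adj_sub h2⟩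
  have hWcard : W.ncard = t := by
    rw [hW, Set.ncard_diff (show ({u, v} : Set V) ⊆ A.verts by
      rintro x (rfl | rfl); exacts [hu, hv]) ((Set.finite_singleton v).insert u), hVcard,
      Set.ncard_pair huv]
    omega
  -- extend W to S of size t' inside C
  have hWfin : W.Finite := hAfin.diff
  obtain ⟨SF, hWS, hSC, hScard⟩ := Finset.exists_subsuperset_card_eq
    (s := hWfin.toFinset) (t := hCfin.toFinset) (n := t')
    (by intro x hx; rw [Set.Finite.mem_toFinset] at *; exact hWsub hx)
    (by rw [← Set.ncard_eq_toFinset_card _ hWfin, hWcard]; omega)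
    (by rw [← Set.ncard_eq_toFinset_card _ hCfin]; exact hcn)
  set S : Set V := ↑SF with hSdef
  have hSsubC : S ⊆ C := fun x hx => (Set.Finite.mem_toFinset hCfin).mp (hSC hx)
  have hS : ∀ x ∈ S, G.Adj u x ∧ G.Adj v x := fun x hx => hSsubC hx
  refine ⟨bipSG G u v S hS, bipSG_isCopyOf hS huv
    (fun h => G.irrefl (hS u h).1) (fun h => G.irrefl (hS v h).2)
    SF.finite_toSet (by rw [hSdef, Set.ncard_coe_finset, hScard]), Or.inl ?_⟩
  intro x hx
  by_cases hxu : x = u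
  · exact Or.inl (Or.inl hxu)
  by_cases hxv : x = v
  · exact Or.inl (Or.inr hxv)
  refine Or.inr ?_
  have : x ∈ W := ⟨hx, by simp [hxu, hxv]⟩
  exact hWS ((Set.Finite.mem_toFinset hWfin).mpr this)

section Struct

variable {V : Type*} {G : SimpleGraph V} {t : ℕ} {A : G.Subgraph}

/-- The left side of a copy of `K_{2,t}`. -/
def Lset (e : A.coe ≃g completeBipartiteGraph (Fin 2) (Fin t)) : Set V :=
  {(e.symm (Sum.inl 0) : V), (e.symm (Sum.inl 1) : V)}

/-- The right side of a copy of `K_{2,t}`. -/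
def Rset (e : A.coe ≃g completeBipartiteGraph (Fin 2) (Fin t)) : Set V :=
  Set.range (fun j : Fin t => (e.symm (Sum.inr j) : V))

variable (e : A.coe ≃g completeBipartiteGraph (Fin 2) (Fin t))

lemma mem_Lset_iff (x : A.verts) : (x : V) ∈ Lset e ↔ ∃ i : Fin 2, e x = Sum.inl i := by
  constructor
  · rintro (h | h)
    · exact ⟨0, by rw [show x = e.symm (Sum.inl 0) from Subtype.ext h]; simp⟩
    · exact ⟨1, by rw [show x = e.symm (Sum.inl 1) from Subtype.ext h]; simp⟩
  · rintro ⟨i, hi⟩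
    have hx : x = e.symm (Sum.inl i) := by
      have := congrArg e.symm hi
      simpa using this
    have : i = 0 ∨ i = 1 := by omega
    rcases this with rfl | rfl
    · exact Or.inl (by rw [hx])
    · exact Or.inr (by rw [hx]; rfl)

lemma mem_Rset_iff (x : A.verts) : (x : V) ∈ Rset e ↔ ∃ j : Fin t, e x = Sum.inr j := by
  constructor
  · rintro ⟨j, hj⟩
    refine ⟨j, ?_⟩
    rw [show x = e.symm (Sum.inr j) from Subtype.ext hj.symm]
    simp
  · rintro ⟨j, hj⟩
    refine ⟨j, ?_⟩
    have := congrArg e.symm hj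
    simp only [RelIso.symm_apply_apply] at this
    rw [this]

lemma verts_eq_union : A.verts = Lset e ∪ Rset e := by
  ext x
  constructor
  · intro hx
    rcases h : e ⟨x, hx⟩ with i | j
    · exact Or.inl ((mem_Lset_iff e ⟨x, hx⟩).mpr ⟨i, h⟩)
    · exact Or.inr ((mem_Rset_iff e ⟨x, hx⟩).mpr ⟨j, h⟩)
  · rintro (h | h)
    · rcases h with h | h
      · rw [h]; exact (e.symm (Sum.inl 0)).2
      · rw [h]; exact (e.symm (Sum.inl 1)).2
    · obtain ⟨j, hj⟩ := h
      rw [← hj]; exact (e.symm (Sum.inr j)).2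

lemma adj_iff_sides (x y : V) :
    A.Adj x y ↔ (x ∈ Lset e ∧ y ∈ Rset e) ∨ (y ∈ Lset e ∧ x ∈ Rset e) := by
  constructor
  · intro hxy
    have hx : x ∈ A.verts := A.edge_vert hxy
    have hy : y ∈ A.verts := A.edge_vert hxy.symm
    have hadj : A.coe.Adj ⟨x, hx⟩ ⟨y, hy⟩ := hxy
    rw [← e.map_adj_iff] at hadj
    rcases hex : e ⟨x, hx⟩ with i | j <;> rcases hey : e ⟨y, hy⟩ with i' | j' <;>
      rw [hex, hey] at hadj <;> simp only [completeBipartiteGraph_adj, Sum.isLeft_inl,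
        Sum.isRight_inl, Sum.isLeft_inr, Sum.isRight_inr] at hadj
    · simp at hadj
    · exact Or.inl ⟨(mem_Lset_iff e ⟨x, hx⟩).mpr ⟨i, hex⟩, (mem_Rset_iff e ⟨y, hy⟩).mpr ⟨j', hey⟩⟩
    · exact Or.inr ⟨(mem_Lset_iff e ⟨y, hy⟩).mpr ⟨i', hey⟩, (mem_Rset_iff e ⟨x, hx⟩).mpr ⟨j, hex⟩⟩
    · simp at hadj
  · have main : ∀ a b : V, a ∈ Lset e → b ∈ Rset e → A.Adj a b := by
      intro a b ha hb
      obtain ⟨j, hj⟩ := hb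
      have hbv : b ∈ A.verts := by rw [← hj]; exact (e.symm (Sum.inr j)).2
      have hav : a ∈ A.verts := by
        rw [verts_eq_union e]; exact Or.inl ha
      obtain ⟨i, hi⟩ := (mem_Lset_iff e ⟨a, hav⟩).mp ha
      obtain ⟨j2, hji⟩ := (mem_Rset_iff e ⟨b, hbv⟩).mp ⟨j, hj⟩
      have : A.coe.Adj ⟨a, hav⟩ ⟨b, hbv⟩ := by
        rw [← e.map_adj_iff, hi, hji]
        simp
      exact this
    rintro (⟨hx, hy⟩ | ⟨hy, hx⟩)
    · exact main _ _ hx hy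
    · exact (main _ _ hy hx).symm

lemma Lval_ne : ((e.symm (Sum.inl 0)) : V) ≠ ((e.symm (Sum.inl 1)) : V) := by
  intro h
  have h2 := congrArg e (Subtype.ext h : e.symm (Sum.inl 0) = e.symm (Sum.inl 1))
  simp only [RelIso.apply_symm_apply] at h2
  exact absurd (Sum.inl_injective h2) (by decide)

lemma Rval_injective : Function.Injective (fun j : Fin t => ((e.symm (Sum.inr j)) : V)) := by
  intro j j' h
  have h2 := congrArg e (Subtype.ext h : e.symm (Sum.inr j) = e.symm (Sum.inr j'))
  simp only [RelIso.apply_symm_apply] at h2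
  exact Sum.inr_injective h2

lemma copy_determined {A' : G.Subgraph}
    (e' : A'.coe ≃g completeBipartiteGraph (Fin 2) (Fin t))
    (hL : Lset e = Lset e') (hR : Rset e = Rset e') : A = A' := by
  refine SimpleGraph.Subgraph.ext ?_ ?_
  · rw [verts_eq_union e, verts_eq_union e', hL, hR]
  · ext x y
    rw [adj_iff_sides e, adj_iff_sides e', hL, hR]

end Struct

lemma count_bound {n t t' : ℕ} (ht : 2 < t) (htt' : t < t') (G : SimpleGraph (Fin n)) :
    niceCopyCount (completeBipartiteGraph (Fin 2) (Fin t))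
      (completeBipartiteGraph (Fin 2) (Fin t')) G ≤ Nat.choose (t' - 1) t * Nat.choose n 2 := by
  classical
  haveI : Finite G.Subgraph :=
    Finite.of_injective (fun A => (A.verts, A.Adj))
      (fun A B h => SimpleGraph.Subgraph.ext (congrArg Prod.fst h) (congrArg Prod.snd h))
  set K := completeBipartiteGraph (Fin 2) (Fin t) with hK
  set K' := completeBipartiteGraph (Fin 2) (Fin t')
  let CN : Finset (Fin n) → Finset (Fin n) := fun P => Finset.univ.filter fun x => ∀ a ∈ P, G.Adj a x
  let F : Finset (Finset (Fin n) × Finset (Fin n)) :=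
    ((Finset.univ.powersetCard 2).filter fun P => (CN P).card ≤ t' - 1).biUnion
      fun P => ((CN P).powersetCard t).image fun T => (P, T)
  let g : {A : G.Subgraph // A.IsCopyOf K ∧ A.Nice K'} → Finset (Fin n) × Finset (Fin n) :=
    fun A => ((Lset A.2.1.some).toFinset, (Rset A.2.1.some).toFinset)
  have hmem : ∀ A, g A ∈ F := by
    rintro ⟨A, hA, hnice⟩
    set e := hA.some with he
    set u : Fin n := (e.symm (Sum.inl 0) : Fin n) with hu'
    set v : Fin n := (e.symm (Sum.inl 1) : Fin n) with hv'
    have hPfin : (Lset e).toFinset = ({u, v} : Finset (Fin n)) := by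
      ext x; rw [Set.mem_toFinset]; simp [Lset, hu', hv']
    have hPcard : (Lset e).toFinset.card = 2 := by
      rw [hPfin, Finset.card_insert_of_notMem (by simpa using Lval_ne e), Finset.card_singleton]
    have hTfin : (Rset e).toFinset = Finset.image (fun j : Fin t => (e.symm (Sum.inr j) : Fin n))
        Finset.univ := by
      ext x; rw [Set.mem_toFinset]; simp [Rset]
    have hTcard : (Rset e).toFinset.card = t := by
      rw [hTfin, Finset.card_image_of_injective _ (Rval_injective e)]
      simp
    have huA : u ∈ A.verts := (e.symm (Sum.inl 0)).2
    have hvA : v ∈ A.verts := (e.symm (Sum.inl 1)).2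
    have huL : u ∈ Lset e := Or.inl rfl
    have hvL : v ∈ Lset e := Or.inr rfl
    have hTsub : (Rset e).toFinset ⊆ CN (Lset e).toFinset := by
      intro x hx
      rw [Set.mem_toFinset] at hx
      have h1 : A.Adj u x := (adj_iff_sides e u x).mpr (Or.inl ⟨huL, hx⟩)
      have h2 : A.Adj v x := (adj_iff_sides e v x).mpr (Or.inl ⟨hvL, hx⟩)
      simp only [CN, Finset.mem_filter, Finset.mem_univ, true_and, hPfin]
      intro a ha
      rcases Finset.mem_insert.mp ha with rfl | ha
      · exact A.adj_sub h1
      · rw [Finset.mem_singleton] at ha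
        subst ha
        exact A.adj_sub h2
    have hcodeg : (CN (Lset e).toFinset).card ≤ t' - 1 := by
      by_contra hcon
      push_neg at hcon
      have hCNset : ↑(CN (Lset e).toFinset) = G.neighborSet u ∩ G.neighborSet v := by
        ext x
        simp only [CN, hPfin, Finset.coe_filter, Finset.mem_univ, true_and, Set.mem_setOf_eq,
          Finset.mem_insert, Finset.mem_singleton, Set.mem_inter_iff, mem_neighborSet,
          forall_eq_or_imp, forall_eq]
      have hcn : t' ≤ (G.neighborSet u ∩ G.neighborSet v).ncard := by
        rw [← hCNset, Set.ncard_coe_finset]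
        omega
      have hadj : ∀ w ∈ A.verts, w ≠ u → w ≠ v → A.Adj u w ∧ A.Adj v w := by
        intro w hw hwu hwv
        rw [verts_eq_union e] at hw
        rcases hw with hL | hR
        · rcases hL with h | h
          · exact absurd h hwu
          · exact absurd h hwv
        · exact ⟨(adj_iff_sides e u w).mpr (Or.inl ⟨huL, hR⟩),
            (adj_iff_sides e v w).mpr (Or.inl ⟨hvL, hR⟩)⟩
      obtain ⟨B, hB, hal⟩ := key_lemma ht htt' u v hcn A ⟨e⟩ huA hvA hadj
      exact hnice B hB hal
    refine Finset.mem_biUnion.mpr ⟨(Lset e).toFinset, ?_, ?_⟩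
    · refine Finset.mem_filter.mpr ⟨Finset.mem_powersetCard.mpr ⟨Finset.subset_univ _, hPcard⟩,
        hcodeg⟩
    · exact Finset.mem_image.mpr ⟨(Rset e).toFinset,
        Finset.mem_powersetCard.mpr ⟨hTsub, hTcard⟩, rfl⟩
  have hinj : Function.Injective g := by
    rintro ⟨A, hA, hnA⟩ ⟨B, hB, hnB⟩ h
    have h1 : Lset hA.some = Lset hB.some := by
      have := congrArg Prod.fst h
      simpa only [g, Set.toFinset_inj] using this
    have h2 : Rset hA.some = Rset hB.some := by
      have := congrArg Prod.snd h
      simpa only [g, Set.toFinset_inj] using this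
    exact Subtype.ext (copy_determined hA.some hB.some h1 h2)
  have hbound : niceCopyCount K K' G ≤ F.card := by
    have := Nat.card_le_card_of_injective
      (fun A => (⟨g A, hmem A⟩ : {p // p ∈ F}))
      (fun A B h => hinj (congrArg Subtype.val h))
    rwa [Nat.card_eq_finsetCard] at this
  refine hbound.trans ?_
  refine (Finset.card_biUnion_le).trans ?_
  have hstep : ∀ P ∈ (Finset.univ.powersetCard 2).filter fun P => (CN P).card ≤ t' - 1,
      (((CN P).powersetCard t).image fun T => (P, T)).card ≤ Nat.choose (t' - 1) t := by
    intro P hP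
    have hP' := (Finset.mem_filter.mp hP).2
    calc (((CN P).powersetCard t).image fun T => (P, T)).card
        ≤ ((CN P).powersetCard t).card := Finset.card_image_le
      _ = (CN P).card.choose t := Finset.card_powersetCard _ _
      _ ≤ Nat.choose (t' - 1) t := Nat.choose_le_choose t hP'
  refine (Finset.sum_le_card_nsmul _ _ _ hstep).trans ?_
  rw [smul_eq_mul]
  have : ((Finset.univ.powersetCard 2).filter fun P => (CN P).card ≤ t' - 1).card
      ≤ Nat.choose n 2 := by
    refine (Finset.card_filter_le _ _).trans ?_
    rw [Finset.card_powersetCard]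
    simp
  calc _ ≤ Nat.choose n 2 * Nat.choose (t' - 1) t := Nat.mul_le_mul_right _ this
    _ = _ := Nat.mul_comm _ _

/-- For `2 < t < t'`, `ex_re(n,K_{2,t},K_{2,t'}) ≤ C(t'-1,t)·C(n,2)`; in particular, if two
vertices `u,v` of a graph `G` have at least `t'` common neighbors, then every copy of
`K_{2,t}` with `{u,v}` as its smaller part aligns with a copy of `K_{2,t'}`. -/
theorem exRe_K2t (t t' : ℕ) (ht : 2 < t) (htt' : t < t') :
    (∀ n : ℕ, exRe n (completeBipartiteGraph (Fin 2) (Fin t))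
        (completeBipartiteGraph (Fin 2) (Fin t'))
      ≤ Nat.choose (t' - 1) t * Nat.choose n 2) ∧
    (∀ (V : Type*) (G : SimpleGraph V) (u v : V),
      t' ≤ (G.neighborSet u ∩ G.neighborSet v).ncard →
      ∀ A : G.Subgraph, A.IsCopyOf (completeBipartiteGraph (Fin 2) (Fin t)) →
        u ∈ A.verts → v ∈ A.verts →
        (∀ w ∈ A.verts, w ≠ u → w ≠ v → A.Adj u w ∧ A.Adj v w) →
        ∃ B : G.Subgraph, B.IsCopyOf (completeBipartiteGraph (Fin 2) (Fin t')) ∧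
          A.Aligns B) := by
  constructor
  · intro n
    refine csSup_le ⟨niceCopyCount _ _ (⊥ : SimpleGraph (Fin n)), ⟨⊥, rfl⟩⟩ ?_
    rintro N ⟨G, rfl⟩
    exact count_bound ht htt' G
  · intro V G u v hcn A hA hu hv hadj
    exact key_lemma ht htt' u v hcn A hA hu hv hadj
end
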